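/- arXiv:2201.03100 — 5 statements merged into one kernel-verified Lean document; each statement's English description precedes it below -/
import Mathlib

section
/- Let A : Fin m × Fin (n²) → Fin n be an orthogonal array OA(m,n) with m ≥ 2, and let C be a clique in the block graph of A that is not contained in any canonical clique S_{r,i}. Then |C| ≤ (m − 1)². -/
/-- An orthogonal array `OA(m,n)`. -/
def IsOrthogonalArray (m n : ℕ) (A : Fin m × Fin (n ^ 2) → Fin n) : Prop :=
  ∀ r s : Fin m, r ≠ s →
    Function.Bijective fun col : Fin (n ^ 2) => (A (r, col), A (s, col))

/-- The block graph of an orthogonal array. -/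
def blockGraph {m n : ℕ} (A : Fin m × Fin (n ^ 2) → Fin n) : SimpleGraph (Fin (n ^ 2)) :=
  SimpleGraph.fromRel fun col col' => ∃ r : Fin m, A (r, col) = A (r, col')

/-- A clique in the block graph of an OA(m,n) (m ≥ 2) that is not contained in any
canonical clique has size at most (m−1)². -/
theorem stmt_11
    (m n : ℕ) (A : Fin m × Fin (n ^ 2) → Fin n) (hA : IsOrthogonalArray m n A)
    (hm : 2 ≤ m)
    (C : Finset (Fin (n ^ 2))) (hC : (blockGraph A).IsClique (C : Set (Fin (n ^ 2))))
    (hnc : ¬ ∃ (r : Fin m) (i : Fin n), (C : Set (Fin (n ^ 2))) ⊆ {col | A (r, col) = i}) :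
    C.card ≤ (m - 1) ^ 2 := by
  classical
  have uniq : ∀ (c c' : Fin (n ^ 2)), c ≠ c' → ∀ r s : Fin m, r ≠ s →
      A (r, c) = A (r, c') → A (s, c) = A (s, c') → False := by
    intro c c' hcc r s hrs h1 h2
    exact hcc ((hA r s hrs).injective (by simp [h1, h2]))
  have adj : ∀ c ∈ C, ∀ c' ∈ C, c ≠ c' → ∃ r, A (r, c) = A (r, c') := by
    intro c hc c' hc' hne
    have h := hC hc hc' hne
    simp only [blockGraph, SimpleGraph.fromRel_adj] at h
    rcases h.2 with ⟨r, h⟩ | ⟨r, h⟩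
    · exact ⟨r, h⟩
    · exact ⟨r, h.symm⟩
  have classBound : ∀ (r : Fin m) (i : Fin n),
      (C.filter (fun c => A (r, c) = i)).card ≤ m - 1 := by
    intro r i
    have hne : ∃ c ∈ C, A (r, c) ≠ i := by
      by_contra h
      push_neg at h
      exact hnc ⟨r, i, fun c hc => h c hc⟩
    obtain ⟨c, hcC, hci⟩ := hne
    have key : ∀ b : Fin (n ^ 2), ∃ s : Fin m,
        b ∈ C.filter (fun c => A (r, c) = i) → s ≠ r ∧ A (s, b) = A (s, c) := by
      intro b
      by_cases hb : b ∈ C.filter (fun c => A (r, c) = i)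
      · simp only [Finset.mem_filter] at hb
        have hbc : b ≠ c := by rintro rfl; exact hci hb.2
        obtain ⟨s, hs⟩ := adj b hb.1 c hcC hbc
        refine ⟨s, fun _ => ⟨?_, hs⟩⟩
        rintro rfl
        rw [hb.2] at hs
        exact hci hs.symm
      · exact ⟨r, fun h => absurd h hb⟩
    choose f hf using key
    have : (C.filter (fun c => A (r, c) = i)).card ≤ (Finset.univ.erase r).card := by
      apply Finset.card_le_card_of_injOn f
      · intro b hb
        exact Finset.mem_erase.2 ⟨(hf b hb).1, Finset.mem_univ _⟩
      · intro b hb b' hb' hfe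
        by_contra hne'
        have h1 := hf b hb
        have h2 := hf b' hb'
        have hr : A (r, b) = A (r, b') := by
          have := (Finset.mem_filter.1 hb).2
          have := (Finset.mem_filter.1 hb').2
          simp_all
        exact uniq b b' hne' r (f b) (Ne.symm h1.1) hr
          (by rw [h1.2, hfe]; exact h2.2.symm)
    simpa [Finset.card_erase_of_mem] using this
  rcases C.eq_empty_or_nonempty with rfl | ⟨c₀, hc₀⟩
  · simp
  · have hsub : C ⊆ insert c₀ (Finset.univ.biUnion fun r =>
        (C.filter fun c => A (r, c) = A (r, c₀)).erase c₀) := by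
      intro c hc
      by_cases h : c = c₀
      · simp [h]
      · obtain ⟨r, hr⟩ := adj c hc c₀ hc₀ h
        simp only [Finset.mem_insert, Finset.mem_biUnion]
        exact Or.inr ⟨r, Finset.mem_univ r,
          Finset.mem_erase.2 ⟨h, Finset.mem_filter.2 ⟨hc, hr⟩⟩⟩
    have hpart : ∀ r : Fin m,
        ((C.filter fun c => A (r, c) = A (r, c₀)).erase c₀).card ≤ m - 2 := by
      intro r
      have h1 : c₀ ∈ C.filter fun c => A (r, c) = A (r, c₀) :=
        Finset.mem_filter.2 ⟨hc₀, rfl⟩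
      have := classBound r (A (r, c₀))
      rw [Finset.card_erase_of_mem h1]
      omega
    have hcard := Finset.card_le_card hsub
    have h2 := Finset.card_insert_le c₀ (Finset.univ.biUnion fun r =>
        (C.filter fun c => A (r, c) = A (r, c₀)).erase c₀)
    have h3 := Finset.card_biUnion_le (s := (Finset.univ : Finset (Fin m)))
        (t := fun r => (C.filter fun c => A (r, c) = A (r, c₀)).erase c₀)
    have h4 : ∑ r : Fin m, ((C.filter fun c => A (r, c) = A (r, c₀)).erase c₀).card
        ≤ m * (m - 2) := by
      calc _ ≤ ∑ _r : Fin m, (m - 2) := Finset.sum_le_sum fun r _ => hpart r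
        _ = m * (m - 2) := by simp [Finset.sum_const, mul_comm]
    have harith : m * (m - 2) + 1 = (m - 1) ^ 2 := by
      obtain ⟨k, rfl⟩ : ∃ k, m = k + 2 := ⟨m - 2, by omega⟩
      have e1 : (k + 2) * (k + 2 - 2) = k * k + 2 * k := by
        have : k + 2 - 2 = k := by omega
        rw [this]; ring
      have e2 : (k + 2 - 1) ^ 2 = k * k + 2 * k + 1 := by
        have : k + 2 - 1 = k + 1 := by omega
        rw [this]; ring
      omega
    omega
end

section
/- Let A : Fin m × Fin (n²) → Fin n be an orthogonal array OA(m,n) with 2 ≤ m ≤ n, and label the entries by {0, 1, …, n−1}. For r ∈ Fin m and i ∈ {1, …, n−1} let f_{r,i} = 1_{S_{r,0}} − 1_{S_{r,i}} ∈ ℚ^(Fin (n²)). Then the m(n−1) vectors f_{r,i} form a basis of the eigenspace {v ∈ ℚ^(Fin (n²)) : M v = (n − m) v} of the adjacency matrix M of the block graph of A corresponding to the eigenvalue n − m; in particular they are linearly independent and this eigenspace has dimension m(n−1). -/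
instance {m n : ℕ} (A : Fin m × Fin (n ^ 2) → Fin n) :
    DecidableRel (blockGraph A).Adj := fun col col' =>
  inferInstanceAs (Decidable (col ≠ col' ∧
    ((∃ r : Fin m, A (r, col) = A (r, col')) ∨ (∃ r : Fin m, A (r, col') = A (r, col)))))

section OA
variable {m n : ℕ} {A : Fin m × Fin (n ^ 2) → Fin n}

open Finset

lemma card_pair (hA : IsOrthogonalArray m n A) {r s : Fin m} (hrs : r ≠ s) (i j : Fin n) :
    (univ.filter fun c : Fin (n ^ 2) => A (r, c) = i ∧ A (s, c) = j).card = 1 := by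
  obtain ⟨c, hc, hu⟩ := (hA r s hrs).existsUnique (i, j)
  rw [Finset.card_eq_one]
  refine ⟨c, ?_⟩
  ext c'
  simp only [mem_filter, mem_univ, true_and, mem_singleton]
  constructor
  · rintro ⟨h1, h2⟩
    exact hu c' (by simp [h1, h2])
  · rintro rfl
    exact ⟨congrArg Prod.fst hc, congrArg Prod.snd hc⟩

lemma agree_two_rows (hA : IsOrthogonalArray m n A) {r s : Fin m} (hrs : r ≠ s)
    {c c' : Fin (n ^ 2)} (h1 : A (r, c) = A (r, c')) (h2 : A (s, c) = A (s, c')) : c = c' := by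
  exact (hA r s hrs).injective (by simp [h1, h2])

lemma card_S (hA : IsOrthogonalArray m n A) (hm : 2 ≤ m) (r : Fin m) (i : Fin n) :
    (univ.filter fun c : Fin (n ^ 2) => A (r, c) = i).card = n := by
  have : ∃ s : Fin m, s ≠ r := by
    rcases Decidable.em (r = ⟨0, by omega⟩) with h | h
    · exact ⟨⟨1, by omega⟩, by simp [h, Fin.ext_iff]⟩
    · exact ⟨⟨0, by omega⟩, fun hh => h (hh ▸ rfl)⟩
  obtain ⟨s, hs⟩ := this
  rw [Finset.card_eq_sum_card_fiberwise (f := fun c => A (s, c)) (t := univ)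
    (fun x _ => mem_univ _)]
  have : ∀ j : Fin n, ((univ.filter fun c : Fin (n ^ 2) => A (r, c) = i).filter
      fun c => A (s, c) = j).card = 1 := by
    intro j
    rw [Finset.filter_filter]
    exact card_pair hA (Ne.symm hs) i j
  simp [this]

end OA

section OA2
variable {m n : ℕ} {A : Fin m × Fin (n ^ 2) → Fin n}
open Finset

lemma sum_ind_mul_ind (hA : IsOrthogonalArray m n A) (hm : 2 ≤ m)
    (r s : Fin m) (i j : Fin n) :
    ∑ c : Fin (n ^ 2), (if A (r, c) = i then (1 : ℚ) else 0) *
      (if A (s, c) = j then (1 : ℚ) else 0) =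
    if r = s then (if i = j then (n : ℚ) else 0) else 1 := by
  have key : ∀ c : Fin (n ^ 2), (if A (r, c) = i then (1 : ℚ) else 0) *
      (if A (s, c) = j then (1 : ℚ) else 0) =
      if A (r, c) = i ∧ A (s, c) = j then 1 else 0 := by
    intro c; split_ifs with h1 h2 h3 <;> simp_all
  simp only [key]
  rw [Finset.sum_boole]
  rcases eq_or_ne r s with rfl | hrs
  · rcases eq_or_ne i j with rfl | hij
    · simp only [and_self]
      rw [card_S hA hm r i]
      simp
    · rw [if_pos rfl, if_neg hij]
      have : (univ.filter fun c : Fin (n ^ 2) => A (r, c) = i ∧ A (r, c) = j) = ∅ := by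
        apply Finset.filter_eq_empty_iff.mpr
        rintro c - ⟨h1, h2⟩
        exact hij (h1 ▸ h2 ▸ rfl)
      rw [this]
      simp
  · rw [if_neg hrs, card_pair hA hrs i j]
    norm_num

end OA2


section OA3
variable {m n : ℕ} {A : Fin m × Fin (n ^ 2) → Fin n}
open Finset

lemma M_entry (hA : IsOrthogonalArray m n A)
    {M : Matrix (Fin (n ^ 2)) (Fin (n ^ 2)) ℚ}
    (hM : ∀ col col', M col col' = if (blockGraph A).Adj col col' then 1 else 0)
    (c c' : Fin (n ^ 2)) :
    M c c' = (∑ r : Fin m, if A (r, c') = A (r, c) then (1 : ℚ) else 0) -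
      (if c' = c then (m : ℚ) else 0) := by
  rcases eq_or_ne c' c with rfl | hcc
  · rw [hM, if_neg ((blockGraph A).irrefl), if_pos rfl]
    simp
  · rw [hM, if_neg hcc]
    simp only [sub_zero]
    by_cases h : ∃ r : Fin m, A (r, c') = A (r, c)
    · have hadj : (blockGraph A).Adj c c' := by
        obtain ⟨r, hr⟩ := h
        exact ⟨Ne.symm hcc, Or.inl ⟨r, hr.symm⟩⟩
      rw [if_pos hadj]
      obtain ⟨r, hr⟩ := h
      have huniq : ∀ s : Fin m, A (s, c') = A (s, c) → s = r := by
        intro s hs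
        by_contra hsr
        exact hcc (agree_two_rows hA hsr hs hr)
      rw [Finset.sum_boole]
      norm_cast
      rw [eq_comm, Finset.card_eq_one]
      refine ⟨r, ?_⟩
      ext s
      simp only [mem_filter, mem_univ, true_and, mem_singleton]
      exact ⟨fun hs => huniq s hs, fun hs => hs ▸ hr⟩
    · have hadj : ¬ (blockGraph A).Adj c c' := by
        rintro ⟨-, h1 | h2⟩
        · obtain ⟨r, hr⟩ := h1
          exact h ⟨r, hr.symm⟩
        · exact h h2
      rw [if_neg hadj]
      rw [Finset.sum_boole]
      norm_cast
      rw [eq_comm, Finset.card_eq_zero, Finset.filter_eq_empty_iff]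
      intro s _
      exact fun hs => h ⟨s, hs⟩

lemma mulVec_pointwise (hA : IsOrthogonalArray m n A)
    {M : Matrix (Fin (n ^ 2)) (Fin (n ^ 2)) ℚ}
    (hM : ∀ col col', M col col' = if (blockGraph A).Adj col col' then 1 else 0)
    (v : Fin (n ^ 2) → ℚ) (c : Fin (n ^ 2)) :
    M.mulVec v c = (∑ r : Fin m, ∑ c' : Fin (n ^ 2),
      if A (r, c') = A (r, c) then v c' else 0) - m * v c := by
  have : M.mulVec v c = ∑ c' : Fin (n ^ 2), M c c' * v c' := by
    simp [Matrix.mulVec, dotProduct]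
  rw [this]
  simp only [M_entry hA hM c, sub_mul, Finset.sum_sub_distrib]
  congr 1
  · simp only [Finset.sum_mul, ite_mul, one_mul, zero_mul]
    exact Finset.sum_comm
  · simp only [ite_mul, zero_mul]
    simp

def fvec {m n : ℕ} (A : Fin m × Fin (n ^ 2) → Fin n)
    (p : Fin m × {i : Fin n // (i : ℕ) ≠ 0}) : Fin (n ^ 2) → ℚ := fun col =>
  (if (A (p.1, col) : ℕ) = 0 then (1 : ℚ) else 0) -
    (if A (p.1, col) = p.2.1 then (1 : ℚ) else 0)

section OA4
variable {m n : ℕ} {A : Fin m × Fin (n ^ 2) → Fin n}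
open Finset

lemma fvec_apply (hn : 0 < n) (p : Fin m × {i : Fin n // (i : ℕ) ≠ 0}) (col : Fin (n ^ 2)) :
    fvec A p col = (if A (p.1, col) = (⟨0, hn⟩ : Fin n) then (1 : ℚ) else 0) -
      (if A (p.1, col) = p.2.1 then (1 : ℚ) else 0) := by
  unfold fvec
  congr 2
  simp [Fin.ext_iff]

lemma csum_f (hA : IsOrthogonalArray m n A) (hm : 2 ≤ m) (hn : 0 < n)
    (r : Fin m) (j : Fin n) (p : Fin m × {i : Fin n // (i : ℕ) ≠ 0}) :
    ∑ c' : Fin (n ^ 2), (if A (r, c') = j then fvec A p c' else 0) =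
    if r = p.1 then (n : ℚ) * ((if j = (⟨0, hn⟩ : Fin n) then (1 : ℚ) else 0) -
      (if j = p.2.1 then (1 : ℚ) else 0)) else 0 := by
  have key : ∀ c', (if A (r, c') = j then fvec A p c' else 0) =
      (if A (r, c') = j then (1:ℚ) else 0) * (if A (p.1, c') = (⟨0, hn⟩ : Fin n) then (1:ℚ) else 0)
      - (if A (r, c') = j then (1:ℚ) else 0) * (if A (p.1, c') = p.2.1 then (1:ℚ) else 0) := by
    intro c'
    rw [fvec_apply hn]
    split_ifs <;> ring
  simp only [key, Finset.sum_sub_distrib]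
  rw [sum_ind_mul_ind hA hm r p.1 j (⟨0, hn⟩ : Fin n),
      sum_ind_mul_ind hA hm r p.1 j p.2.1]
  rcases eq_or_ne r p.1 with h | h
  · rw [if_pos h, if_pos h, if_pos h]
    split_ifs <;> ring
  · rw [if_neg h, if_neg h, if_neg h]
    ring

lemma mulVec_fvec (hA : IsOrthogonalArray m n A) (hm : 2 ≤ m) (hn : 0 < n)
    {M : Matrix (Fin (n ^ 2)) (Fin (n ^ 2)) ℚ}
    (hM : ∀ col col', M col col' = if (blockGraph A).Adj col col' then 1 else 0)
    (p : Fin m × {i : Fin n // (i : ℕ) ≠ 0}) :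
    M.mulVec (fvec A p) = ((n : ℚ) - (m : ℚ)) • fvec A p := by
  funext c
  rw [mulVec_pointwise hA hM]
  simp only [csum_f hA hm hn _ _ p]
  rw [Finset.sum_ite_eq' univ p.1 (fun r => (n : ℚ) *
    ((if A (r, c) = (⟨0, hn⟩ : Fin n) then (1 : ℚ) else 0) -
      (if A (r, c) = p.2.1 then (1 : ℚ) else 0)))]
  rw [if_pos (mem_univ _)]
  rw [← fvec_apply hn p c]
  simp only [Pi.smul_apply, smul_eq_mul]
  ring

lemma mulVec_const (hA : IsOrthogonalArray m n A) (hm : 2 ≤ m)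
    {M : Matrix (Fin (n ^ 2)) (Fin (n ^ 2)) ℚ}
    (hM : ∀ col col', M col col' = if (blockGraph A).Adj col col' then 1 else 0)
    (a : ℚ) :
    M.mulVec (fun _ => a) = fun _ => ((m : ℚ) * n - m) * a := by
  funext c
  rw [mulVec_pointwise hA hM]
  have : ∀ r : Fin m, (∑ c' : Fin (n ^ 2), if A (r, c') = A (r, c) then a else 0)
      = (n : ℚ) * a := by
    intro r
    have : ∀ c' : Fin (n ^ 2), (if A (r, c') = A (r, c) then a else 0)
        = (if A (r, c') = A (r, c) then (1 : ℚ) else 0) * a := by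
      intro c'; split_ifs <;> ring
    simp only [this]
    rw [← Finset.sum_mul, Finset.sum_boole, card_S hA hm r (A (r, c))]
  simp only [this, Finset.sum_const, card_univ, Fintype.card_fin, nsmul_eq_mul]
  ring

lemma dot_ff (hA : IsOrthogonalArray m n A) (hm : 2 ≤ m) (hn : 0 < n)
    (p q : Fin m × {i : Fin n // (i : ℕ) ≠ 0}) :
    ∑ c : Fin (n ^ 2), fvec A p c * fvec A q c =
    if p.1 = q.1 then ((n : ℚ) + if p.2 = q.2 then (n : ℚ) else 0) else 0 := by
  set z : Fin n := ⟨0, hn⟩ with hz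
  have key : ∀ c, fvec A p c * fvec A q c =
      ((if A (p.1, c) = z then (1:ℚ) else 0) * (if A (q.1, c) = z then (1:ℚ) else 0)
      - (if A (p.1, c) = z then (1:ℚ) else 0) * (if A (q.1, c) = q.2.1 then (1:ℚ) else 0))
      - ((if A (p.1, c) = p.2.1 then (1:ℚ) else 0) * (if A (q.1, c) = z then (1:ℚ) else 0)
      - (if A (p.1, c) = p.2.1 then (1:ℚ) else 0) * (if A (q.1, c) = q.2.1 then (1:ℚ) else 0)) := by
    intro c
    rw [fvec_apply hn, fvec_apply hn]
    ring
  simp only [key, Finset.sum_sub_distrib]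
  rw [sum_ind_mul_ind hA hm p.1 q.1 z z, sum_ind_mul_ind hA hm p.1 q.1 z q.2.1,
      sum_ind_mul_ind hA hm p.1 q.1 p.2.1 z, sum_ind_mul_ind hA hm p.1 q.1 p.2.1 q.2.1]
  have hzq : z ≠ q.2.1 := fun h => q.2.2 (by rw [← h])
  have hpz : p.2.1 ≠ z := fun h => p.2.2 (by rw [h])
  have hpq : (p.2.1 = q.2.1) ↔ p.2 = q.2 := Subtype.ext_iff.symm
  rcases eq_or_ne p.1 q.1 with h | h
  · simp only [if_pos h, if_pos rfl, if_true, eq_self_iff_true, if_neg hzq, if_neg hpz]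
    rcases eq_or_ne p.2 q.2 with h2 | h2
    · rw [if_pos (hpq.mpr h2), if_pos h2]
      ring
    · rw [if_neg (fun hh => h2 (hpq.mp hh)), if_neg h2]
      ring
  · simp only [if_neg h]
    ring

lemma card_nonzero (hn : 0 < n) :
    Fintype.card {i : Fin n // (i : ℕ) ≠ 0} = n - 1 := by
  have h1 : Fintype.card {i : Fin n // (i : ℕ) = 0} = 1 := by
    rw [Fintype.card_eq_one_iff]
    exact ⟨⟨⟨0, hn⟩, rfl⟩, by rintro ⟨i, hi⟩; exact Subtype.ext (Fin.ext hi)⟩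
  have := Fintype.card_subtype_compl (fun i : Fin n => (i : ℕ) = 0)
  rw [h1, Fintype.card_fin] at this
  exact this

lemma lin_indep_fvec (hA : IsOrthogonalArray m n A) (hm : 2 ≤ m) (hn : 0 < n) :
    LinearIndependent ℚ (fvec A) := by
  rw [Fintype.linearIndependent_iff]
  intro g hg
  set z : Fin n := ⟨0, hn⟩ with hz
  set T : Fin m → ℚ := fun r => ∑ i : {i : Fin n // (i : ℕ) ≠ 0}, g (r, i) with hT
  have key : ∀ q, (n : ℚ) * (T q.1 + g q) = 0 := by
    intro q
    have h0 : ∀ c, (∑ p, g p * fvec A p c) = 0 := by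
      intro c
      have := congrFun hg c
      simpa [Finset.sum_apply] using this
    have h1 : (∑ c : Fin (n ^ 2), (∑ p, g p * fvec A p c) * fvec A q c) = 0 := by
      simp [h0]
    simp only [Finset.sum_mul, mul_assoc] at h1
    rw [Finset.sum_comm] at h1
    simp only [← Finset.mul_sum, dot_ff hA hm hn] at h1
    rw [Fintype.sum_prod_type] at h1
    rw [Finset.sum_eq_single q.1 (fun r _ hr => by simp [hr]) (by simp)] at h1
    simp only [if_pos rfl, if_true, eq_self_iff_true, mul_add, mul_ite, mul_zero] at h1
    rw [Finset.sum_add_distrib, Finset.sum_ite_eq' Finset.univ q.2] at h1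
    simp only [if_pos (Finset.mem_univ _), ← Finset.sum_mul] at h1
    have hq : (q.1, q.2) = q := rfl
    rw [hq] at h1
    linarith [h1]
  have hnq : (n : ℚ) ≠ 0 := Nat.cast_ne_zero.mpr hn.ne'
  have hg' : ∀ q, g q = - T q.1 := by
    intro q
    have h := key q
    have h2 : T q.1 + g q = 0 := by
      rcases mul_eq_zero.mp h with h' | h'
      · exact absurd h' hnq
      · exact h'
    linarith
  have hTzero : ∀ r, T r = 0 := by
    intro r
    have h3 : T r = ∑ i : {i : Fin n // (i : ℕ) ≠ 0}, -(T r) := by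
      rw [hT]
      exact Finset.sum_congr rfl (fun i _ => hg' (r, i))
    rw [Finset.sum_const, Finset.card_univ, card_nonzero hn, nsmul_eq_mul,
      Nat.cast_sub (by omega : 1 ≤ n)] at h3
    have h4 : (n : ℚ) * T r = 0 := by linear_combination h3
    rcases mul_eq_zero.mp h4 with h' | h'
    · exact absurd h' hnq
    · exact h'
  intro q
  rw [hg' q, hTzero q.1, neg_zero]

lemma span_le_eigen (hA : IsOrthogonalArray m n A) (hm : 2 ≤ m) (hn : 0 < n)
    {M : Matrix (Fin (n ^ 2)) (Fin (n ^ 2)) ℚ}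
    (hM : ∀ col col', M col col' = if (blockGraph A).Adj col col' then 1 else 0)
    {v : Fin (n ^ 2) → ℚ} (hv : v ∈ Submodule.span ℚ (Set.range (fvec A))) :
    M.mulVec v = ((n : ℚ) - (m : ℚ)) • v := by
  induction hv using Submodule.span_induction with
  | mem x hx =>
    obtain ⟨p, rfl⟩ := hx
    exact mulVec_fvec hA hm hn hM p
  | zero => simp [Matrix.mulVec_zero]
  | add x y _ _ hx hy => rw [Matrix.mulVec_add, hx, hy, smul_add]
  | smul a x _ hx => rw [Matrix.mulVec_smul, hx, smul_comm]

def indVec {m n : ℕ} (A : Fin m × Fin (n ^ 2) → Fin n) (r : Fin m) (i : Fin n) :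
    Fin (n ^ 2) → ℚ := fun c => if A (r, c) = i then 1 else 0

lemma ind_mem_span (hn : 0 < n) (r : Fin m) (i : Fin n) :
    indVec A r i ∈ Submodule.span ℚ ({fun _ => (1 : ℚ)} ∪ Set.range (fvec A)) := by
  set W := Submodule.span ℚ ({fun _ => (1 : ℚ)} ∪ Set.range (fvec A)) with hW
  set z : Fin n := ⟨0, hn⟩ with hz
  have hone : (fun _ => (1 : ℚ) : Fin (n ^ 2) → ℚ) ∈ W :=
    Submodule.subset_span (Or.inl rfl)
  have hfmem : ∀ p, fvec A p ∈ W := fun p =>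
    Submodule.subset_span (Or.inr ⟨p, rfl⟩)
  have key : (n : ℚ) • indVec A r z = (fun _ => (1 : ℚ)) +
      ∑ j : {i : Fin n // (i : ℕ) ≠ 0}, fvec A (r, j) := by
    funext c
    simp only [Pi.smul_apply, Pi.add_apply, Finset.sum_apply, smul_eq_mul, indVec]
    simp only [fvec_apply hn]
    rcases eq_or_ne (A (r, c)) z with h | h
    · rw [if_pos h]
      have : ∀ j : {i : Fin n // (i : ℕ) ≠ 0},
          ((if A (r, c) = z then (1:ℚ) else 0) - (if A (r, c) = j.1 then (1:ℚ) else 0)) = 1 := by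
        intro j
        rw [if_pos h, if_neg (fun hh => j.2 (by rw [← hh, h]))]
        ring
      rw [Finset.sum_congr rfl (fun j _ => this j), Finset.sum_const, Finset.card_univ,
        card_nonzero hn, nsmul_eq_mul, Nat.cast_sub (by omega : 1 ≤ n)]
      ring
    · rw [if_neg h]
      have hAn : (A (r, c) : ℕ) ≠ 0 := fun hh => h (Fin.ext hh)
      have : ∀ j : {i : Fin n // (i : ℕ) ≠ 0},
          ((if A (r, c) = z then (1:ℚ) else 0) - (if A (r, c) = j.1 then (1:ℚ) else 0)) =
          -(if (⟨A (r, c), hAn⟩ : {i : Fin n // (i : ℕ) ≠ 0}) = j then (1:ℚ) else 0) := by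
        intro j
        rw [if_neg h, zero_sub]
        congr 1
        simp only [Subtype.ext_iff]
      rw [Finset.sum_congr rfl (fun j _ => this j)]
      simp [Finset.sum_ite_eq]
  have hnq : (n : ℚ) ≠ 0 := Nat.cast_ne_zero.mpr hn.ne'
  have h0 : indVec A r z ∈ W := by
    have heq : indVec A r z = (n : ℚ)⁻¹ • ((fun _ => (1 : ℚ)) +
        ∑ j : {i : Fin n // (i : ℕ) ≠ 0}, fvec A (r, j)) := by
      rw [← key, smul_smul, inv_mul_cancel₀ hnq, one_smul]
    rw [heq]
    exact W.smul_mem _ (W.add_mem hone (Submodule.sum_mem _ (fun j _ => hfmem (r, j))))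
  by_cases hi : (i : ℕ) = 0
  · have : i = z := Fin.ext hi
    rw [this]
    exact h0
  · have heq : indVec A r i = indVec A r z - fvec A (r, ⟨i, hi⟩) := by
      funext c
      simp only [indVec, Pi.sub_apply, fvec_apply hn]
      ring
    rw [heq]
    exact W.sub_mem h0 (hfmem _)

lemma eigen_mem_W (hA : IsOrthogonalArray m n A) (hm : 2 ≤ m) (hn : 0 < n)
    {M : Matrix (Fin (n ^ 2)) (Fin (n ^ 2)) ℚ}
    (hM : ∀ col col', M col col' = if (blockGraph A).Adj col col' then 1 else 0)
    {v : Fin (n ^ 2) → ℚ} (hv : M.mulVec v = ((n : ℚ) - (m : ℚ)) • v) :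
    v ∈ Submodule.span ℚ ({fun _ => (1 : ℚ)} ∪ Set.range (fvec A)) := by
  set W := Submodule.span ℚ ({fun _ => (1 : ℚ)} ∪ Set.range (fvec A)) with hW
  have hnq : (n : ℚ) ≠ 0 := Nat.cast_ne_zero.mpr hn.ne'
  have key : ∀ c, (∑ r : Fin m, ∑ c' : Fin (n ^ 2),
      if A (r, c') = A (r, c) then v c' else 0) = (n : ℚ) * v c := by
    intro c
    have h1 := congrFun hv c
    rw [mulVec_pointwise hA hM] at h1
    simp only [Pi.smul_apply, smul_eq_mul] at h1
    linarith [h1]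
  have hrep : v = (n : ℚ)⁻¹ • ∑ r : Fin m, ∑ i : Fin n,
      (∑ c' : Fin (n ^ 2), if A (r, c') = i then v c' else 0) • indVec A r i := by
    funext c
    simp only [Pi.smul_apply, Finset.sum_apply, Pi.smul_apply, smul_eq_mul, indVec]
    have inner : ∀ r : Fin m, (∑ i : Fin n,
        (∑ c' : Fin (n ^ 2), if A (r, c') = i then v c' else 0) *
          (if A (r, c) = i then (1 : ℚ) else 0)) =
        ∑ c' : Fin (n ^ 2), if A (r, c') = A (r, c) then v c' else 0 := by
      intro r
      simp only [mul_ite, mul_one, mul_zero, Finset.sum_ite_eq, Finset.mem_univ, if_true]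
    rw [Finset.sum_congr rfl (fun r _ => inner r), key c]
    field_simp
  rw [hrep]
  exact W.smul_mem _ (Submodule.sum_mem _ fun r _ => Submodule.sum_mem _
    fun i _ => W.smul_mem _ (ind_mem_span hn r i))

lemma eigen_mem_span (hA : IsOrthogonalArray m n A) (hm : 2 ≤ m) (hmn : m ≤ n)
    {M : Matrix (Fin (n ^ 2)) (Fin (n ^ 2)) ℚ}
    (hM : ∀ col col', M col col' = if (blockGraph A).Adj col col' then 1 else 0)
    {v : Fin (n ^ 2) → ℚ} (hv : M.mulVec v = ((n : ℚ) - (m : ℚ)) • v) :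
    v ∈ Submodule.span ℚ (Set.range (fvec A)) := by
  have hn : 0 < n := by omega
  have h1 := eigen_mem_W hA hm hn hM hv
  rw [Submodule.span_union] at h1
  obtain ⟨x, hx, u, hu, rfl⟩ := Submodule.mem_sup.mp h1
  obtain ⟨a, rfl⟩ := Submodule.mem_span_singleton.mp hx
  have hMu := span_le_eigen hA hm hn hM hu
  have hsm : a • (fun _ => (1 : ℚ) : Fin (n ^ 2) → ℚ) = fun _ => a := by
    funext c; simp
  have hMx : M.mulVec (fun _ => a) = ((n : ℚ) - (m : ℚ)) • (fun _ => a : Fin (n ^ 2) → ℚ) := by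
    have h2 : M.mulVec (fun _ => a) + M.mulVec u =
        ((n : ℚ) - (m : ℚ)) • (fun _ => a : Fin (n ^ 2) → ℚ) + ((n : ℚ) - (m : ℚ)) • u := by
      rw [← Matrix.mulVec_add, ← smul_add, ← hsm]
      exact hv
    rw [hMu] at h2
    exact add_right_cancel h2
  rw [mulVec_const hA hm hM a] at hMx
  have hc0 : 0 < n ^ 2 := by positivity
  have h3 := congrFun hMx ⟨0, hc0⟩
  simp only [Pi.smul_apply, smul_eq_mul] at h3
  have hm2 : (2 : ℚ) ≤ (m : ℚ) := by exact_mod_cast hm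
  have ha : a = 0 := by
    have h4 : a * ((n : ℚ) * ((m : ℚ) - 1)) = 0 := by linear_combination h3
    rcases mul_eq_zero.mp h4 with h' | h'
    · exact h'
    · rcases mul_eq_zero.mp h' with h'' | h''
      · exact absurd h'' (Nat.cast_ne_zero.mpr hn.ne')
      · linarith
  rw [ha, zero_smul, zero_add]
  exact hu

end OA4

/-- The m(n−1) vectors f_{r,i} = 1_{S_{r,0}} − 1_{S_{r,i}} (r a row, i a nonzero entry)
form a basis of the (n−m)-eigenspace of the adjacency matrix of the block graph:
they are linearly independent, their span is exactly the eigenspace, and the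
eigenspace has dimension m(n−1). -/
theorem stmt_13
    (m n : ℕ) (A : Fin m × Fin (n ^ 2) → Fin n) (hA : IsOrthogonalArray m n A)
    (hm : 2 ≤ m) (hmn : m ≤ n)
    (M : Matrix (Fin (n ^ 2)) (Fin (n ^ 2)) ℚ)
    (hM : ∀ col col', M col col' = if (blockGraph A).Adj col col' then 1 else 0)
    (f : Fin m × {i : Fin n // (i : ℕ) ≠ 0} → Fin (n ^ 2) → ℚ)
    (hf : f = fun p col =>
      (if (A (p.1, col) : ℕ) = 0 then (1 : ℚ) else 0) -
        (if A (p.1, col) = p.2.1 then (1 : ℚ) else 0)) :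
    LinearIndependent ℚ f ∧
    (∀ v : Fin (n ^ 2) → ℚ,
      v ∈ Submodule.span ℚ (Set.range f) ↔ M.mulVec v = ((n : ℚ) - (m : ℚ)) • v) ∧
    Module.finrank ℚ (Submodule.span ℚ (Set.range f)) = m * (n - 1) := by
  have hn : 0 < n := by omega
  have hfv : f = fvec A := hf
  subst hfv
  refine ⟨lin_indep_fvec hA hm hn, fun v =>
    ⟨fun hv => span_le_eigen hA hm hn hM hv, fun hv => eigen_mem_span hA hm hmn hM hv⟩, ?_⟩
  rw [finrank_span_eq_card (lin_indep_fvec hA hm hn)]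
  rw [Fintype.card_prod, Fintype.card_fin, card_nonzero hn]
end OA3
end

section
/- Let q be an odd prime power, let X be a Peisert-type graph of type (m,q), and let C be a maximum clique of X (equivalently, a clique of size q). Then the balanced characteristic vector v_C = 1_C − (q/q²)·𝟙 = 1_C − (1/q)·𝟙 ∈ ℚ^(F_{q²}) is an eigenvector of the adjacency matrix M of X with eigenvalue q − m, i.e., M v_C = (q − m) v_C. -/
/-- The balanced characteristic vector of a maximum clique (a clique of size q) in a
Peisert-type graph of type (m,q) is an eigenvector of the adjacency matrix with
eigenvalue q − m. -/
theorem stmt_14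
    (q m : ℕ) (hqodd : Odd q) (hqpp : IsPrimePow q) (hm : m ≤ q)
    (F : Type) [Field F] [Fintype F] [DecidableEq F]
    (hF : Fintype.card F = q ^ 2)
    (K : Subfield F) (hK : Nat.card K = q)
    (c : Fin m → F) (hc : ∀ i, c i ≠ 0)
    (hdistinct : ∀ i j : Fin m, i ≠ j → c i / c j ∉ K)
    (S : Set F)
    (hS : S = ⋃ i : Fin m, {x : F | ∃ k ∈ (K : Set F), k ≠ 0 ∧ x = c i * k})
    (hKS : ∀ k : F, k ∈ K → k ≠ 0 → k ∈ S)
    (X : SimpleGraph F) [DecidableRel X.Adj]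
    (hX : ∀ x y : F, X.Adj x y ↔ x ≠ y ∧ x - y ∈ S)
    (C : Finset F) (hC : X.IsNClique q C)
    (M : Matrix F F ℚ)
    (hM : ∀ x y : F, M x y = if X.Adj x y then 1 else 0)
    (v : F → ℚ)
    (hv : v = fun x => (if x ∈ C then (1 : ℚ) else 0) - 1 / (q : ℚ)) :
    M.mulVec v = ((q : ℚ) - (m : ℚ)) • v := by
  classical
  have hq2 : 2 ≤ q := hqpp.two_le
  have hqQ : (q : ℚ) ≠ 0 := by
    have : 0 < q := by omega
    exact_mod_cast this.ne'
  -- membership in S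
  have hSmem : ∀ z : F, z ∈ S ↔ ∃ i : Fin m, ∃ k : F, k ∈ K ∧ k ≠ 0 ∧ z = c i * k := by
    intro z
    rw [hS]
    simp only [Set.mem_iUnion, Set.mem_setOf_eq, SetLike.mem_coe]
  have hS0 : (0 : F) ∉ S := by
    rw [hSmem]
    rintro ⟨i, k, hk, hk0, h⟩
    exact mul_ne_zero (hc i) hk0 h.symm
  have hCcard : C.card = q := hC.card_eq
  have hCdiff : ∀ y ∈ C, ∀ y' ∈ C, y ≠ y' → y - y' ∈ S := by
    intro y hy y' hy' hne
    exact ((hX y y').mp (hC.isClique hy hy' hne)).2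
  have hm1 : 1 ≤ m := by
    have h1S : (1 : F) ∈ S := hKS 1 K.one_mem one_ne_zero
    obtain ⟨i, -⟩ := (hSmem 1).mp h1S
    have := i.2
    omega
  -- the subfield as a finset
  have hKcard : Fintype.card K = q := by rw [← Nat.card_eq_fintype_card]; exact hK
  set KF : Finset F := Set.toFinset (K : Set F) with hKF
  have hKFmem : ∀ z : F, z ∈ KF ↔ z ∈ K := by
    intro z; simp [hKF]
  have hKFcard : KF.card = q := by
    rw [hKF, Set.toFinset_card, ← hKcard]
    rfl
  -- key decomposition lemma
  have key : ∀ d : F, d ≠ 0 → (∀ k : F, k ∈ K → k ≠ 0 → d * k ∉ S) →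
      ∀ x : F, ∃ y ∈ C, ∃ k : F, k ∈ K ∧ x = y + d * k := by
    intro d hd hdS x
    have hinj : Set.InjOn (fun p : F × F => p.1 + d * p.2) ↑(C ×ˢ KF) := by
      rintro ⟨y, k⟩ hp ⟨y', k'⟩ hp' h
      simp only [Finset.coe_product, Set.mem_prod, Finset.mem_coe, hKFmem] at hp hp'
      simp only at h
      have hyy : y - y' = d * (k' - k) := by linear_combination h
      by_cases hy : y = y'
      · subst hy
        have h0 : d * (k' - k) = 0 := by rw [← hyy]; ring
        have : k' - k = 0 := by
          rcases mul_eq_zero.mp h0 with h | h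
          · exact absurd h hd
          · exact h
        have hk : k = k' := (sub_eq_zero.mp this).symm
        simp [hk]
      · exfalso
        have hkk : k' - k ≠ 0 := by
          intro h0
          apply hy
          have : y - y' = 0 := by rw [hyy, h0, mul_zero]
          exact sub_eq_zero.mp this
        exact hdS (k' - k) (K.sub_mem hp'.2 hp.2) hkk (hyy ▸ hCdiff y hp.1 y' hp'.1 hy)
    have himg : (Finset.image (fun p : F × F => p.1 + d * p.2) (C ×ˢ KF)) = Finset.univ := by
      apply Finset.eq_univ_of_card
      rw [Finset.card_image_of_injOn hinj, Finset.card_product, hCcard, hKFcard, hF]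
      ring
    have hx : x ∈ Finset.image (fun p : F × F => p.1 + d * p.2) (C ×ˢ KF) := by
      rw [himg]; exact Finset.mem_univ x
    obtain ⟨⟨y, k⟩, hp, he⟩ := Finset.mem_image.mp hx
    rw [Finset.mem_product] at hp
    exact ⟨y, hp.1, k, (hKFmem k).mp hp.2, he.symm⟩
  -- size of S
  set Sfin : Finset F := Finset.univ.filter (· ∈ S) with hSfin_def
  have hSfinmem : ∀ z : F, z ∈ Sfin ↔ z ∈ S := by
    intro z; simp [hSfin_def]
  have hSfincard : Sfin.card = m * (q - 1) := by
    have heq : Sfin = Finset.univ.biUnion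
        (fun i : Fin m => (KF.erase 0).image (fun k => c i * k)) := by
      ext z
      rw [hSfinmem, hSmem]
      simp only [Finset.mem_biUnion, Finset.mem_univ, true_and, Finset.mem_image,
        Finset.mem_erase, hKFmem]
      constructor
      · rintro ⟨i, k, hk, hk0, rfl⟩; exact ⟨i, k, ⟨hk0, hk⟩, rfl⟩
      · rintro ⟨i, k, ⟨hk0, hk⟩, rfl⟩; exact ⟨i, k, hk, hk0, rfl⟩
    rw [heq, Finset.card_biUnion]
    · have hcard1 : ∀ i : Fin m, ((KF.erase 0).image (fun k => c i * k)).card = q - 1 := by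
        intro i
        rw [Finset.card_image_of_injective _ (mul_right_injective₀ (hc i)),
          Finset.card_erase_of_mem ((hKFmem 0).mpr K.zero_mem), hKFcard]
      simp [hcard1, Finset.sum_const, Finset.card_univ]
    · intro i _ j _ hij
      simp only [Finset.disjoint_left, Finset.mem_image, Finset.mem_erase, hKFmem]
      rintro z ⟨k, ⟨hk0, hk⟩, rfl⟩ ⟨k', ⟨hk0', hk'⟩, he⟩
      apply hdistinct i j hij
      have : c i / c j = k' / k := by
        rw [div_eq_div_iff (hc j) hk0]
        linear_combination -he
      rw [this]
      exact K.div_mem hk' hk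
  -- degree of every vertex
  have hdeg : ∀ x : F, (Finset.univ.filter (fun y => X.Adj x y)).card = m * (q - 1) := by
    intro x
    rw [← hSfincard]
    apply Finset.card_nbij' (fun y => x - y) (fun z => x - z)
    · intro y hy
      rw [Finset.mem_coe, Finset.mem_filter] at hy
      rw [Finset.mem_coe, hSfinmem]
      exact ((hX x y).mp hy.2).2
    · intro z hz
      rw [Finset.mem_coe, hSfinmem] at hz
      rw [Finset.mem_coe, Finset.mem_filter]
      refine ⟨Finset.mem_univ _, (hX _ _).mpr ⟨?_, by rw [sub_sub_cancel]; exact hz⟩⟩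
      intro h
      have : z = 0 := by
        have := sub_eq_zero.mpr h
        linear_combination this
      exact hS0 (this ▸ hz)
    · intro y _; ring
    · intro z _; ring
  -- the subgroup of units of K inside the units of F
  let H : Subgroup Fˣ :=
    { carrier := {u : Fˣ | (u : F) ∈ K}
      mul_mem' := fun {a b} ha hb => by
        simp only [Set.mem_setOf_eq, Units.val_mul] at *
        exact K.mul_mem ha hb
      one_mem' := by
        simp only [Set.mem_setOf_eq, Units.val_one]
        exact K.one_mem
      inv_mem' := fun {a} ha => by
        simp only [Set.mem_setOf_eq] at *
        rw [Units.val_inv_eq_inv_val]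
        exact K.inv_mem ha }
  have hHmem : ∀ u : Fˣ, u ∈ H ↔ (u : F) ∈ K := fun u => Iff.rfl
  have hHcard : Nat.card H = q - 1 := by
    have e : H ≃ Kˣ :=
      { toFun := fun u => Units.mk0 (⟨((u : Fˣ) : F), u.2⟩ : K)
          (by
            intro h0
            exact (u : Fˣ).ne_zero (congrArg Subtype.val h0))
        invFun := fun k => ⟨Units.mk0 (((k : K) : F))
            (by simpa using k.ne_zero), (k : K).2⟩
        left_inv := fun u => Subtype.ext (Units.ext rfl)
        right_inv := fun k => Units.ext (Subtype.ext rfl) }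
    rw [Nat.card_congr e, Nat.card_eq_fintype_card, Fintype.card_units, hKcard]
  have hQcard : Nat.card (Fˣ ⧸ H) = q + 1 := by
    have h1 := Subgroup.card_eq_card_quotient_mul_card_subgroup H
    have hFu : Nat.card Fˣ = q ^ 2 - 1 := by
      rw [Nat.card_eq_fintype_card, Fintype.card_units, hF]
    rw [hFu, hHcard] at h1
    have hq1 : 0 < q - 1 := by omega
    have h2 : (q + 1) * (q - 1) = q ^ 2 - 1 := by
      have h3 : 1 ≤ q := by omega
      have h4 : 1 ≤ q ^ 2 := by nlinarith
      zify [h3, h4]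
      ring
    exact Nat.eq_of_mul_eq_mul_right hq1 (by rw [h2]; exact h1.symm)
  letI : Fintype (Fˣ ⧸ H) := Fintype.ofFinite _
  -- the image of the cosets in the quotient
  let cu : Fin m → Fˣ := fun i => Units.mk0 (c i) (hc i)
  let B : Finset (Fˣ ⧸ H) := Finset.univ.image (fun i => ((cu i : Fˣ) : Fˣ ⧸ H))
  have hBmem : ∀ u : Fˣ, ((u : Fˣ) : Fˣ ⧸ H) ∈ B ↔ (u : F) ∈ S := by
    intro u
    simp only [B, Finset.mem_image, Finset.mem_univ, true_and]
    rw [hSmem]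
    constructor
    · rintro ⟨i, hi⟩
      have hmem : (((cu i)⁻¹ * u : Fˣ) : F) ∈ K := QuotientGroup.eq.mp hi
      refine ⟨i, (((cu i)⁻¹ * u : Fˣ) : F), hmem, Units.ne_zero _, ?_⟩
      have : (u : F) = ((cu i * ((cu i)⁻¹ * u) : Fˣ) : F) := by
        rw [mul_inv_cancel_left]
      rw [this, Units.val_mul]
      rfl
    · rintro ⟨i, k, hk, hk0, he⟩
      refine ⟨i, QuotientGroup.eq.mpr ?_⟩
      show (((cu i)⁻¹ * u : Fˣ) : F) ∈ K
      have hval : (((cu i)⁻¹ * u : Fˣ) : F) = k := by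
        rw [Units.val_mul, Units.val_inv_eq_inv_val]
        show (c i)⁻¹ * (u : F) = k
        rw [he, inv_mul_cancel_left₀ (hc i)]
      rw [hval]
      exact hk
  have hBcard : B.card = m := by
    have hinj : Function.Injective (fun i => ((cu i : Fˣ) : Fˣ ⧸ H)) := by
      intro i j hij
      by_contra hne
      have hmem : (((cu i)⁻¹ * cu j : Fˣ) : F) ∈ K := QuotientGroup.eq.mp hij
      have hval : (((cu i)⁻¹ * cu j : Fˣ) : F) = c j / c i := by
        rw [Units.val_mul, Units.val_inv_eq_inv_val]
        show (c i)⁻¹ * (c j) = c j / c i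
        rw [div_eq_mul_inv]
        ring
      rw [hval] at hmem
      exact hdistinct j i (fun h => hne h.symm) hmem
    rw [show B = Finset.univ.image (fun i => ((cu i : Fˣ) : Fˣ ⧸ H)) from rfl,
      Finset.card_image_of_injective _ hinj, Finset.card_univ, Fintype.card_fin]
  -- neighbours in C of a vertex outside C
  have hcount : ∀ x : F, x ∉ C → (C.filter (fun y => x - y ∈ S)).card = m - 1 := by
    intro x hx
    have hxy : ∀ y ∈ C, x - y ≠ 0 := by
      intro y hy h
      exact hx (by rwa [sub_eq_zero.mp h])
    have hAc : (C.filter (fun y => ¬ x - y ∈ S)).card = q + 1 - m := by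
      have hcardQ : ((Finset.univ : Finset (Fˣ ⧸ H)) \ B).card = q + 1 - m := by
        rw [Finset.card_sdiff_of_subset (Finset.subset_univ _), Finset.card_univ,
          ← Nat.card_eq_fintype_card, hQcard, hBcard]
      rw [← hcardQ]
      apply Finset.card_bij (fun y hy =>
        ((Units.mk0 (x - y) (hxy y (Finset.mem_filter.mp hy).1) : Fˣ) : Fˣ ⧸ H))
      · intro y hy
        rw [Finset.mem_sdiff]
        refine ⟨Finset.mem_univ _, ?_⟩
        rw [hBmem]
        exact (Finset.mem_filter.mp hy).2
      · intro y hy y' hy' he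
        obtain ⟨hyC, hyS⟩ := Finset.mem_filter.mp hy
        obtain ⟨hyC', hyS'⟩ := Finset.mem_filter.mp hy'
        by_contra hne
        have hmem := QuotientGroup.eq.mp he
        have hkK : (x - y)⁻¹ * (x - y') ∈ K := hmem
        have hxy1 : x - y ≠ 0 := hxy y hyC
        have hxy2 : x - y' = (x - y) * ((x - y)⁻¹ * (x - y')) :=
          (mul_inv_cancel_left₀ hxy1 (x - y')).symm
        set k : F := (x - y)⁻¹ * (x - y') with hkdef
        have hk1 : k - 1 ≠ 0 := by
          intro h0
          apply hne
          have hk1' : k = 1 := by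
            have := sub_eq_zero.mp h0; exact this
          rw [hk1', mul_one] at hxy2
          have : y = y' := by linear_combination hxy2
          exact this
        have hy4 : y - y' = (x - y) * (k - 1) := by
          rw [mul_sub, mul_one, ← hxy2]
          ring
        obtain ⟨i, κ, hκ, hκ0, heq⟩ := (hSmem _).mp (hCdiff y hyC y' hyC' hne)
        have h5 : (x - y) * (k - 1) = c i * κ := hy4.symm.trans heq
        have h6 : x - y = c i * (κ * (k - 1)⁻¹) := by
          field_simp
          linear_combination h5
        exact hyS ((hSmem _).mpr ⟨i, κ * (k - 1)⁻¹,
          K.mul_mem hκ (K.inv_mem (K.sub_mem hkK K.one_mem)),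
          mul_ne_zero hκ0 (inv_ne_zero hk1), h6⟩)
      · intro b hb
        obtain ⟨u, rfl⟩ := QuotientGroup.mk_surjective b
        rw [Finset.mem_sdiff, hBmem] at hb
        have hnB : (u : F) ∉ S := hb.2
        have hdS : ∀ k : F, k ∈ K → k ≠ 0 → (u : F) * k ∉ S := by
          intro k hk hk0 hks
          apply hb.2
          have hmm : ((u * Units.mk0 k hk0 : Fˣ) : Fˣ ⧸ H) = ((u : Fˣ) : Fˣ ⧸ H) :=
            QuotientGroup.mk_mul_of_mem u (by exact hk)
          have : ((u * Units.mk0 k hk0 : Fˣ) : Fˣ ⧸ H) ∈ B := by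
            rw [hBmem]
            exact hks
          rw [hmm] at this
          exact (hBmem u).mp this
        obtain ⟨y, hyC, k, hkK, hxe⟩ := key (u : F) u.ne_zero hdS x
        have hk0 : k ≠ 0 := by
          intro h0
          rw [h0, mul_zero, add_zero] at hxe
          exact hx (hxe ▸ hyC)
        have hmemf : y ∈ C.filter (fun y => ¬ x - y ∈ S) := by
          rw [Finset.mem_filter]
          refine ⟨hyC, ?_⟩
          have : x - y = (u : F) * k := by rw [hxe]; ring
          rw [this]
          exact hdS k hkK hk0
        refine ⟨y, hmemf, ?_⟩
        have hu : Units.mk0 (x - y) (hxy y hyC) = u * Units.mk0 k hk0 := by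
          apply Units.ext
          show x - y = (u : F) * k
          rw [hxe]; ring
        rw [hu]
        exact QuotientGroup.mk_mul_of_mem u (by exact hkK)
    have hsplit := Finset.card_filter_add_card_filter_not
      (s := C) (p := fun y => x - y ∈ S)
    rw [hCcard, hAc] at hsplit
    omega
  -- final assembly
  funext x
  have hmv : M.mulVec v x = ∑ y, M x y * v y := by
    simp [Matrix.mulVec, dotProduct]
  have hvx : ∀ y, M x y * v y =
      (if X.Adj x y ∧ y ∈ C then (1 : ℚ) else 0) - (if X.Adj x y then (1 : ℚ)/q else 0) := by
    intro y
    rw [hM, hv]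
    by_cases h1 : X.Adj x y <;> by_cases h2 : y ∈ C <;> simp [h1, h2]
  have hsum : M.mulVec v x =
      ((Finset.univ.filter (fun y => X.Adj x y ∧ y ∈ C)).card : ℚ)
      - ((Finset.univ.filter (fun y => X.Adj x y)).card : ℚ) * (1/q) := by
    rw [hmv, Finset.sum_congr rfl (fun y _ => hvx y), Finset.sum_sub_distrib]
    congr 1
    · rw [Finset.sum_boole]
    · rw [← Finset.sum_filter, Finset.sum_const, nsmul_eq_mul]
  rw [hsum, hdeg x, Pi.smul_apply, smul_eq_mul, hv]
  have e1 : ((m * (q - 1) : ℕ) : ℚ) = (m : ℚ) * ((q : ℚ) - 1) := by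
    rw [Nat.cast_mul, Nat.cast_sub (by omega : 1 ≤ q), Nat.cast_one]
  by_cases hxC : x ∈ C
  · have hfilt : Finset.univ.filter (fun y => X.Adj x y ∧ y ∈ C) = C.erase x := by
      ext y
      simp only [Finset.mem_filter, Finset.mem_univ, true_and, Finset.mem_erase]
      constructor
      · rintro ⟨ha, hyC⟩
        exact ⟨fun h => ((hX x y).mp ha).1 h.symm, hyC⟩
      · rintro ⟨hne, hyC⟩
        exact ⟨hC.isClique hxC hyC (fun h => hne h.symm), hyC⟩
    rw [hfilt, Finset.card_erase_of_mem hxC, hCcard, e1]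
    simp only [hxC, if_pos]
    rw [Nat.cast_sub (by omega : 1 ≤ q), Nat.cast_one]
    field_simp
  · have hfilt : Finset.univ.filter (fun y => X.Adj x y ∧ y ∈ C)
        = C.filter (fun y => x - y ∈ S) := by
      ext y
      simp only [Finset.mem_filter, Finset.mem_univ, true_and]
      rw [hX]
      constructor
      · rintro ⟨⟨hne, hS'⟩, hyC⟩
        exact ⟨hyC, hS'⟩
      · rintro ⟨hyC, hS'⟩
        exact ⟨⟨fun h => hxC (h ▸ hyC), hS'⟩, hyC⟩
    rw [hfilt, hcount x hxC, e1]
    simp only [hxC, if_neg, not_false_iff]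
    rw [Nat.cast_sub (by omega : 1 ≤ m), Nat.cast_one]
    field_simp
    ring
end

section
/- Let q be an odd prime power and let X be a Peisert-type graph of type (m,q) with m ≥ 2. Then the eigenspace {v ∈ ℚ^(F_{q²}) : M v = (q − m) v} of the adjacency matrix M of X corresponding to the eigenvalue q − m equals the ℚ-linear span of the balanced characteristic vectors of the canonical cliques of X, and this eigenspace has dimension m(q − 1). -/
set_option linter.unusedSectionVars false

open Finset

namespace S15

open scoped Classical

variable {F : Type} [Field F] [Fintype F] [DecidableEq F]

noncomputable def χ (s : Set F) (x : F) : ℚ := if x ∈ s then 1 else 0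

def lineS (K : Subfield F) (a b : F) : Set F := {y | ∃ k ∈ (K : Set F), y = a * k + b}

def punct (K : Subfield F) (a : F) : Set F := {w | ∃ k ∈ (K : Set F), k ≠ 0 ∧ w = a * k}

lemma sum_sub_left (g : F → ℚ) (x : F) : ∑ y : F, g (x - y) = ∑ w : F, g w :=
  Fintype.sum_equiv (Equiv.subLeft x) _ _ (fun _ => rfl)

lemma sum_sub_right (g : F → ℚ) (y : F) : ∑ x : F, g (x - y) = ∑ w : F, g w :=
  Fintype.sum_equiv (Equiv.subRight y) _ _ (fun _ => rfl)

lemma bij (K : Subfield F) (q : ℕ) (hK : Nat.card K = q) (hF : Fintype.card F = q ^ 2)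
    (a b : F) (hb : b ≠ 0) (hab : a / b ∉ K) :
    Function.Bijective (fun p : K × K => a * (p.1 : F) + b * (p.2 : F)) := by
  classical
  have hinj : Function.Injective (fun p : K × K => a * (p.1 : F) + b * (p.2 : F)) := by
    rintro ⟨k1, k2⟩ ⟨k1', k2'⟩ h
    simp only [Prod.mk.injEq] at h ⊢
    by_cases hk : (k1 : F) = (k1' : F)
    · have h2 : (k2 : F) = (k2' : F) := by
        have := h
        rw [hk] at this
        have hb2 : b * (k2 : F) = b * (k2' : F) := by exact add_left_cancel this
        exact mul_left_cancel₀ hb hb2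
      exact ⟨Subtype.ext hk, Subtype.ext h2⟩
    · exfalso
      apply hab
      have hne : (k1 : F) - (k1' : F) ≠ 0 := sub_ne_zero.mpr hk
      have : a / b = ((k2' : F) - (k2 : F)) * ((k1 : F) - (k1' : F))⁻¹ := by
        field_simp
        linear_combination h
      rw [this]
      exact K.mul_mem (K.sub_mem k2'.2 k2.2) (K.inv_mem (K.sub_mem k1.2 k1'.2))
  have hcard : Fintype.card (K × K) = Fintype.card F := by
    rw [Fintype.card_prod, hF, ← Nat.card_eq_fintype_card (α := K), hK]; ring
  exact (Fintype.bijective_iff_injective_and_card _).2 ⟨hinj, hcard⟩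


lemma sum_chi_line (K : Subfield F) (q : ℕ) (hK : Nat.card K = q) (a b : F) (ha : a ≠ 0) :
    ∑ w : F, χ (lineS K a b) w = q := by
  classical
  unfold χ
  rw [Finset.sum_boole]
  have himg : (univ.filter (fun w => w ∈ lineS K a b)) =
      Finset.image (fun k : K => a * (k : F) + b) univ := by
    ext y
    simp only [mem_filter, mem_univ, true_and, mem_image, lineS, Set.mem_setOf_eq,
      SetLike.mem_coe]
    constructor
    · rintro ⟨k, hk, rfl⟩; exact ⟨⟨k, hk⟩, rfl⟩
    · rintro ⟨k, rfl⟩; exact ⟨k, k.2, rfl⟩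
  have hinj : Function.Injective (fun k : K => a * (k : F) + b) := by
    intro k k' h
    exact Subtype.ext (mul_left_cancel₀ ha (add_right_cancel h))
  rw [himg, Finset.card_image_of_injective _ hinj, Finset.card_univ,
    ← Nat.card_eq_fintype_card, hK]

lemma sum_chi_punct (K : Subfield F) (q : ℕ) (hK : Nat.card K = q) (hq : 1 ≤ q)
    (a : F) (ha : a ≠ 0) :
    ∑ w : F, χ (punct K a) w = (q : ℚ) - 1 := by
  classical
  unfold χ
  rw [Finset.sum_boole]
  have himg : (univ.filter (fun w => w ∈ punct K a)) =
      Finset.image (fun k : K => a * (k : F)) (univ.filter (fun k : K => k ≠ 0)) := by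
    ext y
    simp only [mem_filter, mem_univ, true_and, mem_image, punct, Set.mem_setOf_eq,
      SetLike.mem_coe]
    constructor
    · rintro ⟨k, hk, hk0, rfl⟩
      exact ⟨⟨k, hk⟩, fun h => hk0 (by simpa using congrArg Subtype.val h), rfl⟩
    · rintro ⟨k, hk0, rfl⟩
      exact ⟨k, k.2, by simpa using hk0, rfl⟩
  have hinj : Function.Injective (fun k : K => a * (k : F)) := by
    intro k k' h
    exact Subtype.ext (mul_left_cancel₀ ha h)
  rw [himg, Finset.card_image_of_injective _ hinj]
  have : (univ.filter (fun k : K => k ≠ 0)) = univ.erase 0 := by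
    rw [Finset.filter_ne']
  rw [this, Finset.card_erase_of_mem (mem_univ 0), Finset.card_univ,
    ← Nat.card_eq_fintype_card, hK]
  have : (1:ℕ) ≤ q := hq
  push_cast [Nat.cast_sub this]
  ring

lemma inter_unique (K : Subfield F) (q : ℕ) (hK : Nat.card K = q)
    (hF : Fintype.card F = q ^ 2) (a₁ a₂ b₁ b₂ : F) (ha₂ : a₂ ≠ 0) (hab : a₁ / a₂ ∉ K) :
    ∃! y : F, y ∈ lineS K a₁ b₁ ∧ y ∈ lineS K a₂ b₂ := by
  classical
  have hb := bij K q hK hF a₁ a₂ ha₂ hab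
  obtain ⟨p, hp⟩ := hb.2 (b₂ - b₁)
  simp only at hp
  refine ⟨a₁ * (p.1 : F) + b₁, ⟨⟨p.1, p.1.2, rfl⟩, ⟨-p.2, K.neg_mem p.2.2, by
    push_cast; linear_combination hp⟩⟩, ?_⟩
  rintro y ⟨⟨k₁, hk₁, rfl⟩, ⟨k₂, hk₂, hy₂⟩⟩
  have : a₁ * (⟨k₁, hk₁⟩ : K) + a₂ * ((-⟨k₂, hk₂⟩ : K) : F) = b₂ - b₁ := by
    push_cast; linear_combination hy₂
  have := hb.1 (a₁ := (⟨k₁, hk₁⟩, -⟨k₂, hk₂⟩)) (a₂ := p) (by simpa using this.trans hp.symm)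
  have h1 : (k₁ : F) = (p.1 : F) := by
    have := congrArg (fun x : K × K => (x.1 : F)) this
    simpa using this
  rw [h1]

lemma ite_eq_sum {ι : Type*} [Fintype ι] [DecidableEq ι] (P : ι → Prop)
    [∀ i, Decidable (P i)] (h : ∀ i j, P i → P j → i = j) :
    (if ∃ i, P i then (1:ℚ) else 0) = ∑ i, if P i then (1:ℚ) else 0 := by
  classical
  by_cases he : ∃ i, P i
  · obtain ⟨i₀, hi₀⟩ := he
    rw [if_pos ⟨i₀, hi₀⟩]
    rw [Finset.sum_congr rfl (g := fun i => if i = i₀ then (1:ℚ) else 0)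
      (fun i _ => by
        congr 1
        simp only [eq_iff_iff]
        exact ⟨fun hp => h i i₀ hp hi₀, fun he => he ▸ hi₀⟩)]
    simp
  · rw [if_neg he]
    push_neg at he
    exact (Finset.sum_eq_zero (fun i _ => if_neg (he i))).symm

lemma sum_eq_of_unique {P : F → Prop} [∀ y, Decidable (P y)] (h : ∃! y, P y) :
    ∑ y : F, (if P y then (1:ℚ) else 0) = 1 := by
  classical
  obtain ⟨y₀, hy₀, huniq⟩ := h
  rw [Finset.sum_congr rfl (g := fun y => if y = y₀ then (1:ℚ) else 0)
    (fun y _ => by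
      congr 1
      simp only [eq_iff_iff]
      exact ⟨fun hp => huniq y hp, fun he => he ▸ hy₀⟩)]
  simp

lemma mem_line_self (K : Subfield F) (a b : F) : b ∈ lineS K a b :=
  ⟨0, K.zero_mem, by ring⟩

lemma line_shift (K : Subfield F) (a b k₁ : F) (hk₁ : k₁ ∈ K) :
    lineS K a (a * k₁ + b) = lineS K a b := by
  ext y
  constructor
  · rintro ⟨k, hk, rfl⟩
    exact ⟨k + k₁, K.add_mem hk hk₁, by ring⟩
  · rintro ⟨k, hk, rfl⟩
    exact ⟨k - k₁, K.sub_mem hk hk₁, by ring⟩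

lemma line_dir (K : Subfield F) (a b k₀ : F) (hk₀ : k₀ ∈ K) (h0 : k₀ ≠ 0) :
    lineS K (a * k₀) b = lineS K a b := by
  ext y
  constructor
  · rintro ⟨k, hk, rfl⟩
    exact ⟨k₀ * k, K.mul_mem hk₀ hk, by ring⟩
  · rintro ⟨k, hk, rfl⟩
    exact ⟨k₀⁻¹ * k, K.mul_mem (K.inv_mem hk₀) hk, by field_simp⟩

lemma line_par (K : Subfield F) (a b x : F) (hx : x ∉ lineS K a b) :
    ∀ y, y ∈ lineS K a x → y ∈ lineS K a b → False := by
  rintro y ⟨k, hk, rfl⟩ ⟨k', hk', he⟩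
  exact hx ⟨k' - k, K.sub_mem hk' hk, by linear_combination he⟩

section Main

variable (q m : ℕ) (K : Subfield F) (c : Fin m → F)

lemma punct_ne_zero {K : Subfield F} {a x : F} (ha : a ≠ 0) (hx : x ∈ punct K a) : x ≠ 0 := by
  obtain ⟨k, hk, hk0, rfl⟩ := hx
  exact mul_ne_zero ha hk0

lemma punct_disj (hc : ∀ i, c i ≠ 0) (hdistinct : ∀ i j, i ≠ j → c i / c j ∉ K)
    (x : F) : ∀ i j, x ∈ punct K (c i) → x ∈ punct K (c j) → i = j := by
  rintro i j ⟨k, hk, hk0, rfl⟩ ⟨k', hk', hk0', he⟩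
  by_contra hij
  apply hdistinct i j hij
  have : c i / c j = k' / k := by
    rw [div_eq_div_iff (hc j) hk0]
    linear_combination he
  rw [this]
  exact K.div_mem hk' hk

lemma count_same_mem (hK : Nat.card K = q) (i₀ : Fin m) (hci : c i₀ ≠ 0) (b x : F)
    (hx : x ∈ lineS K (c i₀) b) :
    ∑ y : F, χ (punct K (c i₀)) (x - y) * χ (lineS K (c i₀) b) y = (q : ℚ) - 1 := by
  classical
  obtain ⟨kx, hkx, hxe⟩ := hx
  have hcond : ∀ y : F, (x - y ∈ punct K (c i₀) ∧ y ∈ lineS K (c i₀) b) ↔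
      (y ∈ lineS K (c i₀) b ∧ y ≠ x) := by
    intro y
    constructor
    · rintro ⟨hp, hl⟩
      refine ⟨hl, fun h => ?_⟩
      exact punct_ne_zero hci hp (by rw [h, sub_self])
    · rintro ⟨⟨k, hk, rfl⟩, hne⟩
      refine ⟨⟨kx - k, K.sub_mem hkx hk, fun h0 => hne ?_, by rw [hxe]; ring⟩,
        ⟨k, hk, rfl⟩⟩
      have : x - (c i₀ * k + b) = c i₀ * (kx - k) := by rw [hxe]; ring
      rw [h0, mul_zero] at this
      have := sub_eq_zero.mp this
      exact this.symm
  have : ∀ y : F, χ (punct K (c i₀)) (x - y) * χ (lineS K (c i₀) b) y =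
      χ (lineS K (c i₀) b) y - (if y = x then (1:ℚ) else 0) := by
    intro y
    unfold χ
    by_cases hyx : y = x
    · subst hyx
      simp only [if_pos rfl]
      have h1 : y ∈ lineS K (c i₀) b := ⟨kx, hkx, hxe⟩
      have h2 : ¬(y - y ∈ punct K (c i₀)) := fun h => punct_ne_zero hci h (sub_self y)
      rw [if_pos h1, if_neg h2]; simp
    · by_cases hyl : y ∈ lineS K (c i₀) b
      · have := (hcond y).2 ⟨hyl, hyx⟩
        rw [if_pos this.1, if_pos hyl, if_neg hyx]; ring
      · have : ¬(x - y ∈ punct K (c i₀) ∧ y ∈ lineS K (c i₀) b) := fun h => hyl h.2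
        rw [if_neg hyl, if_neg hyx, mul_comm]
        by_cases hp : x - y ∈ punct K (c i₀) <;> simp [hp]
    
  rw [Finset.sum_congr rfl (fun y _ => this y), Finset.sum_sub_distrib,
    sum_chi_line K q hK (c i₀) b hci]
  simp

lemma count_same_not_mem (i₀ : Fin m) (b x : F)
    (hx : x ∉ lineS K (c i₀) b) :
    ∑ y : F, χ (punct K (c i₀)) (x - y) * χ (lineS K (c i₀) b) y = 0 := by
  classical
  apply Finset.sum_eq_zero
  intro y _
  unfold χ
  by_cases hyl : y ∈ lineS K (c i₀) b
  · obtain ⟨k, hk, rfl⟩ := hyl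
    have : ¬(x - (c i₀ * k + b) ∈ punct K (c i₀)) := by
      rintro ⟨k', hk', hk0', he⟩
      exact hx ⟨k' + k, K.add_mem hk' hk, by linear_combination he⟩
    rw [if_neg this, zero_mul]
  · rw [if_neg hyl, mul_zero]

lemma count_diff (hK : Nat.card K = q) (hF : Fintype.card F = q ^ 2)
    (hc : ∀ i, c i ≠ 0) (hdistinct : ∀ i j, i ≠ j → c i / c j ∉ K)
    (i i₀ : Fin m) (hne : i ≠ i₀) (b x : F) :
    ∑ y : F, χ (punct K (c i)) (x - y) * χ (lineS K (c i₀) b) y =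
      if x ∈ lineS K (c i₀) b then 0 else 1 := by
  classical
  have hmem : ∀ y : F, x - y ∈ punct K (c i) ↔ (y ∈ lineS K (c i) x ∧ y ≠ x) := by
    intro y
    constructor
    · rintro ⟨k, hk, hk0, he⟩
      refine ⟨⟨-k, K.neg_mem hk, by linear_combination -he⟩, fun h => ?_⟩
      rw [h, sub_self] at he
      exact (mul_ne_zero (hc i) hk0) he.symm
    · rintro ⟨⟨k, hk, rfl⟩, hne'⟩
      refine ⟨-k, K.neg_mem hk, fun h0 => hne' ?_, by ring⟩
      have : (k : F) = 0 := by rwa [neg_eq_zero] at h0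
      rw [this, mul_zero, zero_add]
  obtain ⟨y₀, hy₀, huniq⟩ := inter_unique K q hK hF (c i) (c i₀) x b (hc i₀)
    (hdistinct i i₀ hne)
  have hprod : ∀ y : F, χ (punct K (c i)) (x - y) * χ (lineS K (c i₀) b) y =
      if (y ∈ lineS K (c i) x ∧ y ∈ lineS K (c i₀) b) ∧ y ≠ x then (1:ℚ) else 0 := by
    intro y
    unfold χ
    by_cases h1 : x - y ∈ punct K (c i) <;> by_cases h2 : y ∈ lineS K (c i₀) b
    · rw [if_pos h1, if_pos h2, if_pos ⟨⟨((hmem y).1 h1).1, h2⟩, ((hmem y).1 h1).2⟩]; ring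
    · have hno : ¬((y ∈ lineS K (c i) x ∧ y ∈ lineS K (c i₀) b) ∧ y ≠ x) := by
        intro hcon; exact h2 hcon.1.2
      rw [if_neg h2, if_neg hno]; ring
    · have hno : ¬((y ∈ lineS K (c i) x ∧ y ∈ lineS K (c i₀) b) ∧ y ≠ x) := by
        intro hcon; exact h1 ((hmem y).2 ⟨hcon.1.1, hcon.2⟩)
      rw [if_neg h1, if_neg hno]; ring
    · have hno : ¬((y ∈ lineS K (c i) x ∧ y ∈ lineS K (c i₀) b) ∧ y ≠ x) := by
        intro hcon; exact h2 hcon.1.2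
      rw [if_neg h1, if_neg hno]; ring
  rw [Finset.sum_congr rfl (fun y _ => hprod y)]
  by_cases hx : x ∈ lineS K (c i₀) b
  · rw [if_pos hx]
    apply Finset.sum_eq_zero
    intro y _
    have hxboth : x ∈ lineS K (c i) x ∧ x ∈ lineS K (c i₀) b := ⟨mem_line_self K (c i) x, hx⟩
    refine if_neg (fun h => h.2 ?_)
    rw [huniq y h.1, huniq x hxboth]
  · rw [if_neg hx]
    apply sum_eq_of_unique
    refine ⟨y₀, ⟨hy₀, fun h => hx (h ▸ hy₀.2)⟩, ?_⟩
    rintro y ⟨hy, -⟩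
    exact huniq y hy

end Main

section Main2

variable (q m : ℕ) (K : Subfield F) (c : Fin m → F)

lemma S_ite (hc : ∀ i, c i ≠ 0) (hdistinct : ∀ i j, i ≠ j → c i / c j ∉ K)
    (S : Set F) (hS : S = ⋃ i : Fin m, punct K (c i)) (w : F) :
    (if w ≠ 0 ∧ w ∈ S then (1:ℚ) else 0) = ∑ i, χ (punct K (c i)) w := by
  classical
  unfold χ
  have hiff : (w ≠ 0 ∧ w ∈ S) ↔ ∃ i, w ∈ punct K (c i) := by
    constructor
    · rintro ⟨-, hw⟩
      rw [hS] at hw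
      exact Set.mem_iUnion.1 hw
    · rintro ⟨i, hi⟩
      exact ⟨punct_ne_zero (hc i) hi, hS ▸ Set.mem_iUnion.2 ⟨i, hi⟩⟩
  rw [if_congr hiff rfl rfl]
  convert ite_eq_sum _ (punct_disj m K c hc hdistinct w)

lemma deg_sum (hK : Nat.card K = q) (hq : 1 ≤ q)
    (hc : ∀ i, c i ≠ 0) (hdistinct : ∀ i j, i ≠ j → c i / c j ∉ K)
    (S : Set F) (hS : S = ⋃ i : Fin m, punct K (c i)) (x : F) :
    ∑ y : F, (if x - y ≠ 0 ∧ x - y ∈ S then (1:ℚ) else 0) = m * ((q:ℚ) - 1) := by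
  classical
  rw [Finset.sum_congr rfl (fun y _ => S_ite m K c hc hdistinct S hS (x - y)),
    Finset.sum_comm]
  rw [Finset.sum_congr rfl (fun i _ => (sum_sub_left (χ (punct K (c i))) x).trans
    (sum_chi_punct K q hK hq (c i) (hc i)))]
  simp [mul_comm]; ring

lemma deg_sum' (hK : Nat.card K = q) (hq : 1 ≤ q)
    (hc : ∀ i, c i ≠ 0) (hdistinct : ∀ i j, i ≠ j → c i / c j ∉ K)
    (S : Set F) (hS : S = ⋃ i : Fin m, punct K (c i)) (y : F) :
    ∑ x : F, (if x - y ≠ 0 ∧ x - y ∈ S then (1:ℚ) else 0) = m * ((q:ℚ) - 1) := by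
  classical
  rw [Finset.sum_congr rfl (fun x _ => S_ite m K c hc hdistinct S hS (x - y)),
    Finset.sum_comm]
  rw [Finset.sum_congr rfl (fun i _ => (sum_sub_right (χ (punct K (c i))) y).trans
    (sum_chi_punct K q hK hq (c i) (hc i)))]
  simp [mul_comm]; ring

lemma gen_step (hK : Nat.card K = q) (hF : Fintype.card F = q ^ 2) (hm1 : 1 ≤ m)
    (hc : ∀ i, c i ≠ 0) (hdistinct : ∀ i j, i ≠ j → c i / c j ∉ K)
    (S : Set F) (hS : S = ⋃ i : Fin m, punct K (c i)) (i₀ : Fin m) (b x : F) :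
    ∑ y : F, (if x - y ≠ 0 ∧ x - y ∈ S then (1:ℚ) else 0) * χ (lineS K (c i₀) b) y
      = if x ∈ lineS K (c i₀) b then (q:ℚ) - 1 else (m:ℚ) - 1 := by
  classical
  rw [Finset.sum_congr rfl (fun y _ => by
    rw [S_ite m K c hc hdistinct S hS (x - y), Finset.sum_mul])]
  rw [Finset.sum_comm]
  have hval : ∀ i : Fin m, ∑ y : F, χ (punct K (c i)) (x - y) * χ (lineS K (c i₀) b) y
      = if i = i₀ then (if x ∈ lineS K (c i₀) b then (q:ℚ) - 1 else 0)
        else (if x ∈ lineS K (c i₀) b then 0 else 1) := by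
    intro i
    by_cases hi : i = i₀
    · subst hi
      by_cases hx : x ∈ lineS K (c i) b
      · rw [if_pos rfl, if_pos hx, count_same_mem q m K c hK i (hc i) b x hx]
      · rw [if_pos rfl, if_neg hx, count_same_not_mem m K c i b x hx]
    · rw [if_neg hi, count_diff q m K c hK hF hc hdistinct i i₀ hi b x]
  rw [Finset.sum_congr rfl (fun i _ => hval i)]
  set A := (if x ∈ lineS K (c i₀) b then (q:ℚ) - 1 else 0) with hA
  set Bv := (if x ∈ lineS K (c i₀) b then (0:ℚ) else 1) with hB
  have hsplit : ∀ i : Fin m, (if i = i₀ then A else Bv) = Bv + (if i = i₀ then A - Bv else 0) := by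
    intro i; by_cases hi : i = i₀ <;> simp [hi]
  rw [Finset.sum_congr rfl (fun i _ => hsplit i), Finset.sum_add_distrib,
    Finset.sum_const, Finset.sum_ite_eq' univ i₀, if_pos (mem_univ i₀), Finset.card_univ,
    Fintype.card_fin, nsmul_eq_mul]
  by_cases hx : x ∈ lineS K (c i₀) b
  · rw [if_pos hx, hA, hB, if_pos hx, if_pos hx]; ring
  · rw [if_neg hx, hA, hB, if_neg hx, if_neg hx]; ring

end Main2

section Main3

variable (q m : ℕ) (K : Subfield F) (c : Fin m → F)

lemma gen_mulvec (hK : Nat.card K = q) (hF : Fintype.card F = q ^ 2)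
    (hq : 1 ≤ q) (hm1 : 1 ≤ m)
    (hc : ∀ i, c i ≠ 0) (hdistinct : ∀ i j, i ≠ j → c i / c j ∉ K)
    (S : Set F) (hS : S = ⋃ i : Fin m, punct K (c i)) (i₀ : Fin m) (b x : F) :
    ∑ y : F, (if x - y ≠ 0 ∧ x - y ∈ S then (1:ℚ) else 0) *
        (χ (lineS K (c i₀) b) y - 1/q)
      = ((q:ℚ) - m) * (χ (lineS K (c i₀) b) x - 1/q) := by
  classical
  have hq0 : (q:ℚ) ≠ 0 := by
    have : (1:ℚ) ≤ (q:ℚ) := by exact_mod_cast hq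
    linarith
  rw [Finset.sum_congr rfl (fun y _ => by
    show (if x - y ≠ 0 ∧ x - y ∈ S then (1:ℚ) else 0) * (χ (lineS K (c i₀) b) y - 1/q)
      = (if x - y ≠ 0 ∧ x - y ∈ S then (1:ℚ) else 0) * χ (lineS K (c i₀) b) y
        - (1/q) * (if x - y ≠ 0 ∧ x - y ∈ S then (1:ℚ) else 0)
    ring)]
  rw [Finset.sum_sub_distrib, ← Finset.mul_sum,
    gen_step q m K c hK hF hm1 hc hdistinct S hS i₀ b x,
    deg_sum q m K c hK hq hc hdistinct S hS x]
  unfold χ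
  by_cases hx : x ∈ lineS K (c i₀) b
  · rw [if_pos hx, if_pos hx]; field_simp
  · rw [if_neg hx, if_neg hx]; field_simp; ring

lemma chi_mul (A B : Set F) (x : F) :
    χ A x * χ B x = if x ∈ A ∧ x ∈ B then (1:ℚ) else 0 := by
  classical
  unfold χ
  by_cases h1 : x ∈ A <;> by_cases h2 : x ∈ B <;> simp [h1, h2]

lemma ip_calc (hF : Fintype.card F = q ^ 2) (hq0 : (q:ℚ) ≠ 0) (L₁ L₂ : Set F)
    (h₁ : ∑ x : F, χ L₁ x = q) (h₂ : ∑ x : F, χ L₂ x = q) :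
    ∑ x : F, (χ L₁ x - 1/q) * (χ L₂ x - 1/q)
      = (∑ x : F, χ L₁ x * χ L₂ x) - 1 := by
  classical
  rw [Finset.sum_congr rfl (fun x _ => by
    show (χ L₁ x - 1/q) * (χ L₂ x - 1/q)
      = χ L₁ x * χ L₂ x - (1/q) * χ L₁ x - (1/q) * χ L₂ x + (1/q) * (1/q)
    ring)]
  rw [Finset.sum_add_distrib, Finset.sum_sub_distrib, Finset.sum_sub_distrib,
    ← Finset.mul_sum, ← Finset.mul_sum, h₁, h₂, Finset.sum_const, Finset.card_univ, hF,
    nsmul_eq_mul]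
  push_cast
  field_simp
  ring

lemma chi_sq (L : Set F) (x : F) : χ L x * χ L x = χ L x := by
  classical
  unfold χ; by_cases h : x ∈ L <;> simp [h]

lemma sum_f_zero (hF : Fintype.card F = q ^ 2) (hq0 : (q:ℚ) ≠ 0) (L : Set F)
    (hL : ∑ x : F, χ L x = q) :
    ∑ x : F, (χ L x - 1/q) = 0 := by
  classical
  rw [Finset.sum_sub_distrib, hL, Finset.sum_const, Finset.card_univ, hF, nsmul_eq_mul]
  push_cast
  field_simp
  ring

end Main3

section Main4

variable (q m : ℕ) (K : Subfield F) (c : Fin m → F)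

noncomputable def Nmap (K : Subfield F) (a : F) (v : F → ℚ) (x : F) : ℚ :=
  ∑ y : F, χ (lineS K a 0) (x - y) * v y

lemma chi_punct_eq (a : F) (ha : a ≠ 0) (w : F) :
    χ (punct K a) w = χ (lineS K a 0) w - (if w = 0 then (1:ℚ) else 0) := by
  classical
  unfold χ
  by_cases hw : w = 0
  · subst hw
    rw [if_neg (fun h => punct_ne_zero ha h rfl), if_pos ⟨0, K.zero_mem, by ring⟩,
      if_pos rfl]
    ring
  · have hiff : w ∈ punct K a ↔ w ∈ lineS K a 0 := by
      constructor
      · rintro ⟨k, hk, hk0, rfl⟩; exact ⟨k, hk, by ring⟩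
      · rintro ⟨k, hk, he⟩
        refine ⟨k, hk, fun h0 => hw ?_, by rw [he]; ring⟩
        rw [he, h0, mul_zero, add_zero]
    rw [if_congr hiff rfl rfl, if_neg hw]
    ring

lemma mulvec_decomp (hc : ∀ i, c i ≠ 0)
    (hdistinct : ∀ i j, i ≠ j → c i / c j ∉ K)
    (S : Set F) (hS : S = ⋃ i : Fin m, punct K (c i)) (v : F → ℚ) (x : F) :
    ∑ y : F, (if x - y ≠ 0 ∧ x - y ∈ S then (1:ℚ) else 0) * v y
      = (∑ i, Nmap K (c i) v x) - m * v x := by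
  classical
  rw [Finset.sum_congr rfl (fun y _ => by
    rw [S_ite m K c hc hdistinct S hS (x - y), Finset.sum_mul])]
  rw [Finset.sum_comm]
  have hper : ∀ i : Fin m, ∑ y : F, χ (punct K (c i)) (x - y) * v y
      = Nmap K (c i) v x - v x := by
    intro i
    rw [Finset.sum_congr rfl (fun y _ => by
      rw [chi_punct_eq K (c i) (hc i) (x - y), sub_mul])]
    rw [Finset.sum_sub_distrib]
    unfold Nmap
    congr 1
    rw [Finset.sum_congr rfl (g := fun y => if y = x then v y else 0) (fun y _ => by
      by_cases hy : y = x
      · subst hy; simp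
      · have h1 : ¬(x - y = 0) := fun h => hy (by linear_combination -h)
        simp [h1, hy])]
    rw [Finset.sum_ite_eq' univ x v, if_pos (mem_univ x)]
  rw [Finset.sum_congr rfl (fun i _ => hper i), Finset.sum_sub_distrib,
    Finset.sum_const, Finset.card_univ, Fintype.card_fin, nsmul_eq_mul]

lemma Nmap_const (a : F) (v : F → ℚ) (x x' : F) (h : x - x' ∈ lineS K a 0) :
    Nmap K a v x = Nmap K a v x' := by
  classical
  unfold Nmap
  apply Finset.sum_congr rfl
  intro y _
  congr 1
  unfold χ
  have hiff : x - y ∈ lineS K a 0 ↔ x' - y ∈ lineS K a 0 := by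
    obtain ⟨k₀, hk₀, he₀⟩ := h
    constructor
    · rintro ⟨k, hk, he⟩
      exact ⟨k - k₀, K.sub_mem hk hk₀, by linear_combination he - he₀⟩
    · rintro ⟨k, hk, he⟩
      exact ⟨k + k₀, K.add_mem hk hk₀, by linear_combination he + he₀⟩
  rw [if_congr hiff rfl rfl]

lemma expand_line (hK : Nat.card K = q) (hF : Fintype.card F = q ^ 2)
    (a d : F) (hd : d ≠ 0) (had : a / d ∉ K)
    (w : F → ℚ) (hw : ∀ x x', x - x' ∈ lineS K a 0 → w x = w x') (x : F) :
    w x = ∑ k : K, w (d * (k : F)) * χ (lineS K a (d * (k : F))) x := by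
  classical
  obtain ⟨p, hp⟩ := (bij K q hK hF a d hd had).2 x
  simp only at hp
  have huniq : ∀ k : K, x ∈ lineS K a (d * (k : F)) ↔ k = p.2 := by
    intro k
    constructor
    · rintro ⟨k', hk', he⟩
      have heq : a * ((⟨k', hk'⟩ : K) : F) + d * ((k : K) : F)
          = a * (p.1 : F) + d * (p.2 : F) := by
        rw [hp]; linear_combination he.symm
      have := (bij K q hK hF a d hd had).1 (a₁ := (⟨k', hk'⟩, k)) (a₂ := p) heq
      exact congrArg Prod.snd this
    · rintro rfl
      exact ⟨p.1, p.1.2, by rw [← hp]⟩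
  rw [Finset.sum_congr rfl (g := fun k : K => if k = p.2 then w (d * (k : F)) else 0)
    (fun k _ => by
      unfold χ
      rw [if_congr (huniq k) rfl rfl]
      by_cases hk : k = p.2 <;> simp [hk])]
  rw [Finset.sum_ite_eq' univ p.2, if_pos (mem_univ p.2)]
  apply hw
  exact ⟨p.1, p.1.2, by rw [← hp]; ring⟩

lemma sum_inter_one (hK : Nat.card K = q) (hF : Fintype.card F = q ^ 2)
    (a₁ a₂ b₁ b₂ : F) (ha₂ : a₂ ≠ 0) (hab : a₁ / a₂ ∉ K) :
    ∑ x : F, χ (lineS K a₁ b₁) x * χ (lineS K a₂ b₂) x = 1 := by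
  classical
  rw [Finset.sum_congr rfl (fun x _ => chi_mul (lineS K a₁ b₁) (lineS K a₂ b₂) x)]
  exact sum_eq_of_unique (inter_unique K q hK hF a₁ a₂ b₁ b₂ ha₂ hab)

lemma sum_inter_zero (L₁ L₂ : Set F) (h : ∀ y, y ∈ L₁ → y ∈ L₂ → False) :
    ∑ x : F, χ L₁ x * χ L₂ x = 0 := by
  classical
  rw [Finset.sum_congr rfl (fun x _ => chi_mul L₁ L₂ x)]
  exact Finset.sum_eq_zero (fun x _ => if_neg (fun hcon => h x hcon.1 hcon.2))

lemma par_disjoint (hK : Nat.card K = q) (hF : Fintype.card F = q ^ 2)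
    (a d : F) (hd : d ≠ 0) (had : a / d ∉ K) (k k' : K) (hkk : k ≠ k') :
    ∀ y, y ∈ lineS K a (d * (k : F)) → y ∈ lineS K a (d * (k' : F)) → False := by
  rintro y ⟨k₁, hk₁, he₁⟩ ⟨k₂, hk₂, he₂⟩
  have heq : a * ((⟨k₁, hk₁⟩ : K) : F) + d * ((k : K) : F)
      = a * ((⟨k₂, hk₂⟩ : K) : F) + d * ((k' : K) : F) := by
    simp only
    linear_combination he₁.symm.trans he₂
  have := (bij K q hK hF a d hd had).1 (a₁ := (⟨k₁, hk₁⟩, k)) (a₂ := (⟨k₂, hk₂⟩, k')) heq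
  exact hkk (congrArg Prod.snd this)

end Main4

end S15
open S15 in
/-- For a Peisert-type graph of type (m,q) with m ≥ 2, the (q−m)-eigenspace of the
adjacency matrix equals the ℚ-span of the balanced characteristic vectors of the
canonical cliques, and it has dimension m(q−1). -/
theorem stmt_15
    (q m : ℕ) (hqodd : Odd q) (hqpp : IsPrimePow q) (hm : m ≤ q) (hm2 : 2 ≤ m)
    (F : Type) [Field F] [Fintype F] [DecidableEq F]
    (hF : Fintype.card F = q ^ 2)
    (K : Subfield F) (hK : Nat.card K = q)
    (c : Fin m → F) (hc : ∀ i, c i ≠ 0)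
    (hdistinct : ∀ i j : Fin m, i ≠ j → c i / c j ∉ K)
    (S : Set F)
    (hS : S = ⋃ i : Fin m, {x : F | ∃ k ∈ (K : Set F), k ≠ 0 ∧ x = c i * k})
    (hKS : ∀ k : F, k ∈ K → k ≠ 0 → k ∈ S)
    (X : SimpleGraph F) [DecidableRel X.Adj]
    (hX : ∀ x y : F, X.Adj x y ↔ x ≠ y ∧ x - y ∈ S)
    (M : Matrix F F ℚ)
    (hM : ∀ x y : F, M x y = if X.Adj x y then 1 else 0)
    (B : Set (F → ℚ))
    (hB : B = {v : F → ℚ | ∃ a ∈ S, ∃ b : F,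
      v = fun x => Set.indicator {y : F | ∃ k ∈ (K : Set F), y = a * k + b}
            (fun _ => (1 : ℚ)) x - 1 / (q : ℚ)}) :
    (∀ v : F → ℚ, M.mulVec v = ((q : ℚ) - (m : ℚ)) • v ↔ v ∈ Submodule.span ℚ B) ∧
    Module.finrank ℚ (Submodule.span ℚ B) = m * (q - 1) := by
  classical
  have hq2 : 2 ≤ q := hqpp.two_le
  have hq1 : 1 ≤ q := by omega
  have hm1 : 1 ≤ m := by omega
  have hq0 : (q:ℚ) ≠ 0 := Nat.cast_ne_zero.mpr (by omega)
  have hS' : S = ⋃ i : Fin m, punct K (c i) := hS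
  -- auxiliary direction-swap
  set i0 : Fin m := ⟨0, by omega⟩ with hi0
  set i1 : Fin m := ⟨1, by omega⟩ with hi1
  set σ : Fin m → Fin m := fun i => if i = i0 then i1 else i0 with hσdef
  have h01 : i1 ≠ i0 := by simp [hi0, hi1, Fin.ext_iff]
  have hσ : ∀ i, σ i ≠ i := by
    intro i
    by_cases h : i = i0
    · subst h; simpa [hσdef] using h01
    · simpa [hσdef, if_neg h] using Ne.symm h
  -- mulVec formula
  have hMV : ∀ (v : F → ℚ) (x : F), M.mulVec v x
      = ∑ y : F, (if x - y ≠ 0 ∧ x - y ∈ S then (1:ℚ) else 0) * v y := by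
    intro v x
    show ∑ y : F, M x y * v y = _
    apply Finset.sum_congr rfl
    intro y _
    have hiff : X.Adj x y ↔ (x - y ≠ 0 ∧ x - y ∈ S) := by rw [hX x y, sub_ne_zero]
    rw [hM x y]
    exact congrArg (· * v y) (if_congr hiff rfl rfl)
  -- description of B
  have hBeq : ∀ v : F → ℚ, v ∈ B ↔
      ∃ i : Fin m, ∃ b : F, v = fun x => χ (lineS K (c i) b) x - 1/(q:ℚ) := by
    intro v
    rw [hB]
    simp only [Set.mem_setOf_eq]
    constructor
    · rintro ⟨a, haS, b, rfl⟩
      rw [hS'] at haS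
      obtain ⟨i, k, hk, hk0, rfl⟩ := Set.mem_iUnion.1 haS
      refine ⟨i, b, ?_⟩
      funext x
      have hind : Set.indicator {y : F | ∃ k' ∈ (K:Set F), y = (c i * k) * k' + b}
          (fun _ => (1:ℚ)) x = χ (lineS K (c i * k) b) x := by
        simp only [χ, lineS, Set.indicator_apply]
        by_cases hmem : x ∈ {y : F | ∃ k' ∈ (K:Set F), y = c i * k * k' + b}
        · rw [if_pos hmem]; exact (if_pos hmem).symm
        · rw [if_neg hmem]; exact (if_neg hmem).symm
      rw [hind, line_dir K (c i) b k hk hk0]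
    · rintro ⟨i, b, rfl⟩
      refine ⟨c i, ?_, b, ?_⟩
      · rw [hS']
        exact Set.mem_iUnion.2 ⟨i, ⟨1, K.one_mem, one_ne_zero, (mul_one _).symm⟩⟩
      · funext x
        have hind : Set.indicator {y : F | ∃ k' ∈ (K:Set F), y = c i * k' + b}
            (fun _ => (1:ℚ)) x = χ (lineS K (c i) b) x := by
          simp only [χ, lineS, Set.indicator_apply]
          by_cases hmem : x ∈ {y : F | ∃ k' ∈ (K:Set F), y = c i * k' + b}
          · rw [if_pos hmem]; exact (if_pos hmem).symm
          · rw [if_neg hmem]; exact (if_neg hmem).symm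
        rw [hind]
  -- generators are eigenvectors
  have hgen : ∀ v ∈ B, M.mulVec v = ((q : ℚ) - (m : ℚ)) • v := by
    intro v hv
    obtain ⟨i, b, rfl⟩ := (hBeq v).1 hv
    funext x
    rw [hMV]
    show _ = ((q : ℚ) - (m : ℚ)) * (χ (lineS K (c i) b) x - 1/(q:ℚ))
    exact gen_mulvec q m K c hK hF hq1 hm1 hc hdistinct S hS' i b x
  -- the family
  set u : (Fin m × {k : K // k ≠ 0}) → (F → ℚ) :=
    fun p => fun x => χ (lineS K (c p.1) (c (σ p.1) * ((p.2 : K) : F))) x - 1/(q:ℚ)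
    with hu
  have huB : ∀ p, u p ∈ B := by
    intro p
    exact (hBeq _).2 ⟨p.1, c (σ p.1) * ((p.2 : K) : F), rfl⟩
  have hpart : ∀ (i : Fin m) (x : F),
      ∑ k : K, χ (lineS K (c i) (c (σ i) * (k : F))) x = 1 := by
    intro i x
    have := expand_line q K hK hF (c i) (c (σ i)) (hc _)
      (hdistinct i (σ i) (Ne.symm (hσ i))) (fun _ => (1:ℚ)) (fun _ _ _ => rfl) x
    simpa using this.symm
  have hgK : ∀ i : Fin m, ∑ k : K,
      (fun x => χ (lineS K (c i) (c (σ i) * (k : F))) x - 1/(q:ℚ)) = 0 := by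
    intro i
    funext x
    rw [Finset.sum_apply]
    rw [Finset.sum_sub_distrib, hpart i x, Finset.sum_const, Finset.card_univ,
      ← Nat.card_eq_fintype_card, hK, nsmul_eq_mul, Pi.zero_apply]
    field_simp; exact sub_self 1
  have hspan_eq : Submodule.span ℚ B = Submodule.span ℚ (Set.range u) := by
    apply le_antisymm
    · rw [Submodule.span_le]
      intro v hv
      obtain ⟨i, b, rfl⟩ := (hBeq v).1 hv
      obtain ⟨p, hp⟩ := (bij K q hK hF (c i) (c (σ i)) (hc _)
        (hdistinct i (σ i) (Ne.symm (hσ i)))).2 b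
      simp only at hp
      have hline : lineS K (c i) b = lineS K (c i) (c (σ i) * ((p.2 : K) : F)) := by
        rw [← hp]
        exact line_shift K (c i) (c (σ i) * ((p.2 : K) : F)) p.1 p.1.2
      rw [hline]
      by_cases h2 : (p.2 : K) = 0
      · -- the omitted coset: negative of the sum of the others
        have h0 : (fun x => χ (lineS K (c i) (c (σ i) * ((p.2 : K) : F))) x - 1/(q:ℚ))
            = - ∑ k ∈ Finset.univ.erase (p.2 : K),
                (fun x => χ (lineS K (c i) (c (σ i) * (k : F))) x - 1/(q:ℚ)) := by
          have := Finset.add_sum_erase Finset.univ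
            (fun k : K => (fun x => χ (lineS K (c i) (c (σ i) * (k : F))) x - 1/(q:ℚ)))
            (Finset.mem_univ (p.2 : K))
          rw [hgK i] at this
          linear_combination (norm := abel) this
        rw [h0]
        apply Submodule.neg_mem
        apply Submodule.sum_mem
        intro k hk
        have hk0 : k ≠ 0 := by
          intro h
          exact (Finset.mem_erase.1 hk).1 (h.trans (h2.symm))
        exact Submodule.subset_span ⟨(i, ⟨k, hk0⟩), rfl⟩
      · exact Submodule.subset_span ⟨(i, ⟨(p.2 : K), h2⟩), rfl⟩
    · rw [Submodule.span_le]
      rintro v ⟨p, rfl⟩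
      exact Submodule.subset_span (huB p)
  have hGram : ∀ p p₀ : Fin m × {k : K // k ≠ 0},
      ∑ x : F, u p x * u p₀ x =
        if p.1 = p₀.1 then (if p.2 = p₀.2 then (q:ℚ) - 1 else -1) else 0 := by
    rintro ⟨i, k⟩ ⟨j, k₀⟩
    simp only
    have hsum1 : ∑ x : F, χ (lineS K (c i) (c (σ i) * ((k : K) : F))) x = q :=
      sum_chi_line K q hK _ _ (hc _)
    have hsum2 : ∑ x : F, χ (lineS K (c j) (c (σ j) * ((k₀ : K) : F))) x = q :=
      sum_chi_line K q hK _ _ (hc _)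
    have hcalc : ∑ x : F, u (i,k) x * u (j,k₀) x
        = (∑ x : F, χ (lineS K (c i) (c (σ i) * ((k : K) : F))) x
            * χ (lineS K (c j) (c (σ j) * ((k₀ : K) : F))) x) - 1 :=
      ip_calc q hF hq0 _ _ hsum1 hsum2
    rw [hcalc]
    by_cases h1 : i = j
    · subst h1
      rw [if_pos rfl]
      by_cases h2 : k = k₀
      · subst h2
        rw [if_pos rfl, Finset.sum_congr rfl (fun x _ => chi_sq _ x), hsum1]
      · rw [if_neg h2]
        have hdisj := par_disjoint q K hK hF (c i) (c (σ i)) (hc _)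
          (hdistinct i (σ i) (Ne.symm (hσ i))) (k : K) (k₀ : K)
          (fun h => h2 (Subtype.ext h))
        rw [sum_inter_zero _ _ hdisj]
        ring
    · rw [if_neg h1, sum_inter_one q K hK hF _ _ _ _ (hc j) (hdistinct i j h1)]
      ring
  have hindep : LinearIndependent ℚ u := by
    rw [Fintype.linearIndependent_iff]
    intro g hg
    have hkey : ∀ p₀ : Fin m × {k : K // k ≠ 0}, (q:ℚ) * g p₀
        = ∑ k : {k : K // k ≠ 0}, g (p₀.1, k) := by
      intro p₀
      have h0 : ∑ x : F, (∑ p, g p • u p) x * u p₀ x = 0 := by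
        rw [hg]; simp
      have hswap : ∑ x : F, (∑ p, g p • u p) x * u p₀ x
          = ∑ p, g p * (∑ x : F, u p x * u p₀ x) := by
        rw [Finset.sum_congr rfl (fun x (_ : x ∈ univ) => by
          rw [Finset.sum_apply, Finset.sum_mul])]
        rw [Finset.sum_comm]
        apply Finset.sum_congr rfl
        intro p _
        rw [Finset.mul_sum]
        apply Finset.sum_congr rfl
        intro x _
        rw [Pi.smul_apply, smul_eq_mul]
        ring
      rw [hswap, Finset.sum_congr rfl (fun p (_ : p ∈ univ) => by rw [hGram p p₀]),
        Fintype.sum_prod_type] at h0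
      have hinner : ∀ i : Fin m, ∑ k : {k : K // k ≠ 0},
          g (i, k) * (if i = p₀.1 then (if k = p₀.2 then (q:ℚ) - 1 else -1) else 0)
          = if i = p₀.1 then ((q:ℚ) * g (i, p₀.2) - ∑ k : {k : K // k ≠ 0}, g (i, k))
            else 0 := by
        intro i
        by_cases hi : i = p₀.1
        · simp only [if_pos hi]
          rw [Finset.sum_congr rfl (g := fun k : {k : K // k ≠ 0} =>
            (if k = p₀.2 then (q:ℚ) * g (i, k) else 0) - g (i, k))
            (fun k (_ : k ∈ univ) => by
              by_cases hk : k = p₀.2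
              · simp only [if_pos hk]; ring
              · simp only [if_neg hk]; ring)]
          rw [Finset.sum_sub_distrib, Finset.sum_ite_eq' univ p₀.2
            (fun k => (q:ℚ) * g (i, k)), if_pos (mem_univ p₀.2)]
        · rw [if_neg hi]
          rw [Finset.sum_congr rfl (fun k (_ : k ∈ univ) => by
            rw [if_neg hi, mul_zero])]
          exact Finset.sum_const_zero
      rw [Finset.sum_congr rfl (fun i (_ : i ∈ univ) => hinner i),
        Finset.sum_ite_eq' univ p₀.1, if_pos (mem_univ p₀.1)] at h0
      have : (p₀.1, p₀.2) = p₀ := rfl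
      rw [this] at h0
      linarith [h0]
    intro p
    have hsj : ∑ k : {k : K // k ≠ 0}, g (p.1, k) = 0 := by
      have hcardn : Fintype.card {k : K // k ≠ 0} = q - 1 := by
        rw [Fintype.card_subtype_compl, Fintype.card_subtype_eq,
          ← Nat.card_eq_fintype_card, hK]
      have hcard : (Fintype.card {k : K // k ≠ 0} : ℚ) = (q:ℚ) - 1 := by
        rw [hcardn]
        push_cast [Nat.cast_sub hq1]
        ring
      have hsum : (q:ℚ) * (∑ k : {k : K // k ≠ 0}, g (p.1, k))
          = ((q:ℚ) - 1) * (∑ k : {k : K // k ≠ 0}, g (p.1, k)) := by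
        rw [Finset.mul_sum, Finset.sum_congr rfl
          (g := fun _ : {k : K // k ≠ 0} => ∑ k' : {k : K // k ≠ 0}, g (p.1, k'))
          (fun k (_ : k ∈ univ) => hkey (p.1, k)), Finset.sum_const, Finset.card_univ,
          nsmul_eq_mul, hcard]
      linear_combination hsum
    have hp := hkey p
    rw [hsj] at hp
    exact (mul_eq_zero.1 hp).resolve_left hq0
  constructor
  · intro v
    constructor
    · intro hv
      have heig : ∀ x, ∑ i : Fin m, Nmap K (c i) v x = (q:ℚ) * v x := by
        intro x
        have h1 : M.mulVec v x = ((q:ℚ) - (m:ℚ)) * v x := by rw [hv]; rfl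
        rw [hMV v x, mulvec_decomp m K c hc hdistinct S hS' v x] at h1
        linarith [h1]
      have honemem : (fun _ : F => (1:ℚ)) ∈ Submodule.span ℚ (insert (fun _ : F => (1:ℚ)) B) :=
        Submodule.subset_span (Set.mem_insert _ _)
      have hone : ∀ (i : Fin m) (b : F), (fun x => χ (lineS K (c i) b) x) ∈
          Submodule.span ℚ (insert (fun _ : F => (1:ℚ)) B) := by
        intro i b
        have hdec : (fun x => χ (lineS K (c i) b) x)
            = (fun x => χ (lineS K (c i) b) x - 1/(q:ℚ)) + (1/(q:ℚ)) • (fun _ : F => (1:ℚ)) := by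
          funext x
          simp only [Pi.add_apply, Pi.smul_apply, smul_eq_mul]
          ring
        rw [hdec]
        exact Submodule.add_mem _
          (Submodule.subset_span (Set.mem_insert_of_mem _ ((hBeq _).2 ⟨i, b, rfl⟩)))
          (Submodule.smul_mem _ _ honemem)
      have hNmem : ∀ i : Fin m, Nmap K (c i) v ∈
          Submodule.span ℚ (insert (fun _ : F => (1:ℚ)) B) := by
        intro i
        have hrep : Nmap K (c i) v = ∑ k : K, (Nmap K (c i) v (c (σ i) * (k:F))) •
            (fun x => χ (lineS K (c i) (c (σ i) * (k:F))) x) := by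
          funext x
          rw [Finset.sum_apply]
          have hex := expand_line q K hK hF (c i) (c (σ i)) (hc _)
            (hdistinct i (σ i) (Ne.symm (hσ i))) (Nmap K (c i) v)
            (fun x x' h => Nmap_const K (c i) v x x' h) x
          rw [hex]
          apply Finset.sum_congr rfl
          intro k _
          rw [Pi.smul_apply, smul_eq_mul]
        rw [hrep]
        exact Submodule.sum_mem _ (fun k _ => Submodule.smul_mem _ _ (hone i _))
      have hvmem : v ∈ Submodule.span ℚ (insert (fun _ : F => (1:ℚ)) B) := by
        have hveq : v = (q:ℚ)⁻¹ • ∑ i : Fin m, Nmap K (c i) v := by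
          funext x
          rw [Pi.smul_apply, Finset.sum_apply, heig x, smul_eq_mul]
          field_simp
        rw [hveq]
        exact Submodule.smul_mem _ _ (Submodule.sum_mem _ (fun i _ => hNmem i))
      have hφ : ∀ w ∈ Submodule.span ℚ B, ∑ x : F, w x = 0 := by
        intro w hw
        induction hw using Submodule.span_induction with
        | mem f hf =>
          obtain ⟨i, b, rfl⟩ := (hBeq f).1 hf
          exact sum_f_zero q hF hq0 _ (sum_chi_line K q hK _ _ (hc i))
        | zero => simp
        | add f g' _ _ hf hg' => simp [Pi.add_apply, Finset.sum_add_distrib, hf, hg']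
        | smul a f _ hf => simp [Pi.smul_apply, smul_eq_mul, ← Finset.mul_sum, hf]
      obtain ⟨t, z, hz, hvz⟩ := Submodule.mem_span_insert.1 hvmem
      have hsumz : ∑ x : F, z x = 0 := hφ z hz
      have h2 : ∀ y : F, ∑ x : F, (if x - y ≠ 0 ∧ x - y ∈ S then (1:ℚ) else 0) * v y
          = (m:ℚ) * ((q:ℚ) - 1) * v y := by
        intro y
        rw [← Finset.sum_mul, deg_sum' q m K c hK hq1 hc hdistinct S hS' y]
      have h1 : ∑ x : F, M.mulVec v x = ((q:ℚ) - (m:ℚ)) * ∑ x : F, v x := by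
        rw [hv, Finset.mul_sum]
        exact Finset.sum_congr rfl (fun x _ => rfl)
      have h3 : ∑ x : F, M.mulVec v x = (m:ℚ) * ((q:ℚ) - 1) * ∑ y : F, v y := by
        rw [Finset.sum_congr rfl (fun x (_ : x ∈ univ) => hMV v x), Finset.sum_comm,
          Finset.sum_congr rfl (fun y (_ : y ∈ univ) => h2 y), ← Finset.mul_sum]
      have h4 : ((q:ℚ) - (m:ℚ)) * (∑ x : F, v x) = (m:ℚ) * ((q:ℚ) - 1) * ∑ y : F, v y :=
        h1 ▸ h3
      have hmq : (1:ℚ) ≤ (q:ℚ) := by exact_mod_cast hq1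
      have hm2' : (2:ℚ) ≤ (m:ℚ) := by exact_mod_cast hm2
      have hcoef : (m:ℚ) * ((q:ℚ) - 1) - ((q:ℚ) - (m:ℚ)) ≠ 0 := by nlinarith
      have h5 : ((m:ℚ) * ((q:ℚ) - 1) - ((q:ℚ) - (m:ℚ))) * ∑ x : F, v x = 0 := by
        linear_combination -h4
      have hsumv : ∑ x : F, v x = 0 := (mul_eq_zero.1 h5).resolve_left hcoef
      have ht : t = 0 := by
        have hcomp : ∑ x : F, v x = t * (q:ℚ)^2 := by
          rw [hvz]
          rw [Finset.sum_congr rfl (fun x (_ : x ∈ univ) =>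
            (by simp : (t • (fun _ : F => (1:ℚ)) + z) x = t + z x))]
          rw [Finset.sum_add_distrib, hsumz, Finset.sum_const, Finset.card_univ,
            nsmul_eq_mul, hF]
          push_cast; ring
        rw [hsumv] at hcomp
        have hq2' : ((q:ℚ)^2) ≠ 0 := pow_ne_zero 2 hq0
        rcases mul_eq_zero.1 hcomp.symm with h | h
        · exact h
        · exact absurd h hq2'
      rw [hvz, ht, zero_smul, zero_add] at *
      exact hz
    · intro hv
      have hsub : Submodule.span ℚ B ≤
          LinearMap.ker (M.mulVecLin - ((q:ℚ) - (m:ℚ)) • LinearMap.id) := by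
        rw [Submodule.span_le]
        intro w hw
        rw [SetLike.mem_coe, LinearMap.mem_ker, LinearMap.sub_apply, LinearMap.smul_apply,
          LinearMap.id_apply, Matrix.mulVecLin_apply, hgen w hw, sub_self]
      have hker := hsub hv
      rw [LinearMap.mem_ker, LinearMap.sub_apply, LinearMap.smul_apply, LinearMap.id_apply,
        Matrix.mulVecLin_apply] at hker
      exact sub_eq_zero.1 hker

  · rw [hspan_eq, finrank_span_eq_card hindep, Fintype.card_prod, Fintype.card_fin]
    congr 1
    rw [Fintype.card_subtype_compl, Fintype.card_subtype_eq,
      ← Nat.card_eq_fintype_card, hK]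
end

section
/- Let q be an odd prime power and let X be a Peisert-type graph of type (m,q). Then the independence number of X equals q; moreover, every maximum independent set of X meets every maximum clique of X in exactly one vertex. -/
/-- A Peisert-type graph of type (m,q) has independence number q, and every maximum
independent set meets every maximum clique in exactly one vertex. -/
theorem stmt_16
    (q m : ℕ) (hqodd : Odd q) (hqpp : IsPrimePow q) (hm : m ≤ q)
    (F : Type) [Field F] [Fintype F] [DecidableEq F]
    (hF : Fintype.card F = q ^ 2)
    (K : Subfield F) (hK : Nat.card K = q)
    (c : Fin m → F) (hc : ∀ i, c i ≠ 0)
    (hdistinct : ∀ i j : Fin m, i ≠ j → c i / c j ∉ K)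
    (S : Set F)
    (hS : S = ⋃ i : Fin m, {x : F | ∃ k ∈ (K : Set F), k ≠ 0 ∧ x = c i * k})
    (hKS : ∀ k : F, k ∈ K → k ≠ 0 → k ∈ S)
    (X : SimpleGraph F)
    (hX : ∀ x y : F, X.Adj x y ↔ x ≠ y ∧ x - y ∈ S) :
    (∃ I : Finset F, (∀ x ∈ I, ∀ y ∈ I, x ≠ y → ¬ X.Adj x y) ∧ I.card = q) ∧
    (∀ I : Finset F, (∀ x ∈ I, ∀ y ∈ I, x ≠ y → ¬ X.Adj x y) → I.card ≤ q) ∧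
    (∀ I C : Finset F,
      (∀ x ∈ I, ∀ y ∈ I, x ≠ y → ¬ X.Adj x y) →
      (∀ J : Finset F, (∀ x ∈ J, ∀ y ∈ J, x ≠ y → ¬ X.Adj x y) → J.card ≤ I.card) →
      X.IsClique (C : Set F) →
      (∀ D : Finset F, X.IsClique (D : Set F) → D.card ≤ C.card) →
      (I ∩ C).card = 1) := by
  classical
  have hq2 : 2 ≤ q := hqpp.two_le
  -- the finset underlying K
  set Kf : Finset F := Finset.univ.filter (· ∈ K) with hKfdef
  have hmemKf : ∀ x : F, x ∈ Kf ↔ x ∈ K := by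
    intro x; simp [hKfdef]
  have hKfcard : Kf.card = q := by
    rw [← hK, Nat.card_eq_fintype_card, Fintype.card_subtype]
  -- stability of S under multiplication by nonzero elements of K
  have hSstab : ∀ x ∈ S, ∀ k : F, k ∈ K → k ≠ 0 → x * k ∈ S := by
    intro x hx k hk hk0
    rw [hS] at hx ⊢
    rcases Set.mem_iUnion.1 hx with ⟨i, hi⟩
    rcases hi with ⟨k', hk', hk'0, hxe⟩
    refine Set.mem_iUnion.2 ⟨i, k' * k, K.mul_mem hk' hk, mul_ne_zero hk'0 hk0, ?_⟩
    rw [hxe]; ring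
  -- quotient group has q elements
  set A : AddSubgroup F := K.toAddSubgroup with hAdef
  have hmemA : ∀ x : F, x ∈ A ↔ x ∈ K := fun x => Iff.rfl
  have hquot : Nat.card (F ⧸ A) = q := by
    have h := AddSubgroup.card_eq_card_quotient_mul_card_addSubgroup A
    have hcA : Nat.card A = q := hK
    rw [hcA, Nat.card_eq_fintype_card, hF] at h
    have h2 : q * q = Nat.card (F ⧸ A) * q := by rw [← h]; ring
    exact (Nat.eq_of_mul_eq_mul_right (by omega) h2.symm)
  have hfinQ : Finite (F ⧸ A) := Quotient.finite _
  have instQ : Fintype (F ⧸ A) := Fintype.ofFinite _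
  have hquot' : Fintype.card (F ⧸ A) = q := by
    rw [← Nat.card_eq_fintype_card]; exact hquot
  -- key counting lemma: sets whose scaled differences avoid K have at most q elements
  have key : ∀ (T : Finset F) (e : F),
      (∀ x ∈ T, ∀ y ∈ T, x ≠ y → (y - x) * e ∉ K) → T.card ≤ q := by
    intro T e hT
    have hinj : Set.InjOn (fun x : F => (QuotientAddGroup.mk (x * e) : F ⧸ A)) ↑T := by
      intro x hx y hy hxy
      by_contra hne
      have hmemq : -(x * e) + y * e ∈ A := (QuotientAddGroup.eq).1 hxy
      have hmem : (y - x) * e ∈ K := by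
        have h2 : (y - x) * e = -(x * e) + y * e := by ring
        rw [h2]; exact hmemq
      exact hT x hx y hy hne hmem
    calc T.card ≤ (Finset.univ : Finset (F ⧸ A)).card :=
          Finset.card_le_card_of_injOn _ (fun _ _ => Finset.mem_univ _) hinj
      _ = q := by rw [Finset.card_univ, hquot']
  -- independent sets have at most q elements
  have indep_le : ∀ I : Finset F, (∀ x ∈ I, ∀ y ∈ I, x ≠ y → ¬ X.Adj x y) → I.card ≤ q := by
    intro I hI
    refine key I 1 ?_
    intro x hx y hy hxy hmem
    rw [mul_one] at hmem
    have hy0 : y - x ≠ 0 := sub_ne_zero.2 (Ne.symm hxy)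
    have : X.Adj y x := (hX y x).2 ⟨Ne.symm hxy, hKS _ hmem hy0⟩
    exact hI y hy x hx (Ne.symm hxy) this
  -- existence of d ∉ S, d ≠ 0
  obtain ⟨d, hd0, hdS⟩ : ∃ d : F, d ≠ 0 ∧ d ∉ S := by
    set Sf : Finset F := Finset.univ.filter (· ∈ S) with hSfdef
    have h0K : (0:F) ∈ Kf := (hmemKf 0).2 K.zero_mem
    have hsub : Sf ⊆ Finset.univ.biUnion (fun i : Fin m => (Kf.erase 0).image (c i * ·)) := by
      intro x hx
      have hxS : x ∈ S := by simpa [hSfdef] using hx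
      rw [hS] at hxS
      rcases Set.mem_iUnion.1 hxS with ⟨i, k, hk, hk0, hxe⟩
      refine Finset.mem_biUnion.2 ⟨i, Finset.mem_univ _, Finset.mem_image.2 ⟨k, ?_, hxe.symm⟩⟩
      exact Finset.mem_erase.2 ⟨hk0, (hmemKf k).2 hk⟩
    have hScard : Sf.card ≤ m * (q - 1) := by
      calc Sf.card ≤ _ := Finset.card_le_card hsub
        _ ≤ ∑ i : Fin m, ((Kf.erase 0).image (c i * ·)).card := Finset.card_biUnion_le
        _ ≤ ∑ _i : Fin m, (q - 1) := by
            refine Finset.sum_le_sum fun i _ => ?_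
            calc ((Kf.erase 0).image (c i * ·)).card ≤ (Kf.erase 0).card :=
                  Finset.card_image_le
              _ = q - 1 := by rw [Finset.card_erase_of_mem h0K, hKfcard]
        _ = m * (q - 1) := by simp [Finset.sum_const, Finset.card_univ]
    have hlt : (insert (0:F) Sf).card < Fintype.card F := by
      have h1 : (insert (0:F) Sf).card ≤ Sf.card + 1 := Finset.card_insert_le _ _
      have h2 : m * (q - 1) ≤ q * (q - 1) := Nat.mul_le_mul_right _ hm
      have h3 : q * (q - 1) + 1 < q ^ 2 := by
        obtain ⟨s, rfl⟩ : ∃ s, q = s + 1 := ⟨q - 1, by omega⟩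
        simp only [Nat.add_sub_cancel]
        nlinarith [hq2]
      rw [hF]; omega
    obtain ⟨d, hd⟩ : ∃ d : F, d ∉ insert (0:F) Sf := by
      by_contra hcon
      push_neg at hcon
      have : (Finset.univ : Finset F) ⊆ insert (0:F) Sf := fun x _ => hcon x
      have := Finset.card_le_card this
      rw [Finset.card_univ] at this
      omega
    refine ⟨d, ?_, ?_⟩
    · intro h; exact hd (by rw [h]; exact Finset.mem_insert_self _ _)
    · intro h
      exact hd (Finset.mem_insert_of_mem (by simp [hSfdef, h]))
  -- S-avoidance transfers: if (y-x)*d⁻¹ ∈ K nonzero and y-x ∈ S then d ∈ S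
  have hdiv : ∀ x : F, x ∈ S → ∀ k : F, k ∈ K → k ≠ 0 → x = d * k → False := by
    intro x hxS k hk hk0 hxe
    have : x * k⁻¹ ∈ S := hSstab x hxS k⁻¹ (K.inv_mem hk) (inv_ne_zero hk0)
    have hd : d = x * k⁻¹ := by
      rw [hxe]; field_simp
    exact hdS (hd ▸ this)
  -- the independent set of size q : d • K
  have exists_indep : ∃ I : Finset F,
      (∀ x ∈ I, ∀ y ∈ I, x ≠ y → ¬ X.Adj x y) ∧ I.card = q := by
    refine ⟨Kf.image (d * ·), ?_, ?_⟩
    · intro x hx y hy hxy hadj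
      rcases Finset.mem_image.1 hx with ⟨k1, hk1, rfl⟩
      rcases Finset.mem_image.1 hy with ⟨k2, hk2, rfl⟩
      have hxS : d * k1 - d * k2 ∈ S := ((hX _ _).1 hadj).2
      have hk12 : k1 - k2 ≠ 0 := by
        intro h
        apply hxy
        have : k1 = k2 := by linear_combination h
        rw [this]
      have hkK : k1 - k2 ∈ K := K.sub_mem ((hmemKf k1).1 hk1) ((hmemKf k2).1 hk2)
      exact hdiv _ hxS (k1 - k2) hkK hk12 (by ring)
    · rw [Finset.card_image_of_injective _ (mul_right_injective₀ hd0), hKfcard]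
  -- cliques have at most q elements
  have clique_le : ∀ C : Finset F, X.IsClique (C : Set F) → C.card ≤ q := by
    intro C hC
    refine key C d⁻¹ ?_
    intro x hx y hy hxy hmem
    have hadj : X.Adj x y := hC hx hy hxy
    have hxS : x - y ∈ S := ((hX _ _).1 hadj).2
    have hk0 : (y - x) * d⁻¹ ≠ 0 :=
      mul_ne_zero (sub_ne_zero.2 (Ne.symm hxy)) (inv_ne_zero hd0)
    have hyxS : y - x ∈ S := by
      have : x - y ∈ S := hxS
      rw [hS] at this ⊢
      rcases Set.mem_iUnion.1 this with ⟨i, k, hk, hk0', hxe⟩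
      refine Set.mem_iUnion.2 ⟨i, -k, K.neg_mem hk, neg_ne_zero.2 hk0', ?_⟩
      have : y - x = -(x - y) := by ring
      rw [this, hxe]; ring
    refine hdiv (y - x) hyxS ((y - x) * d⁻¹) hmem hk0 ?_
    field_simp
  -- K itself is a clique of size q
  have hKclique : X.IsClique (↑Kf : Set F) := by
    intro x hx y hy hxy
    have hxK : x ∈ K := (hmemKf x).1 (by simpa using hx)
    have hyK : y ∈ K := (hmemKf y).1 (by simpa using hy)
    exact (hX x y).2 ⟨hxy, hKS _ (K.sub_mem hxK hyK) (sub_ne_zero.2 hxy)⟩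
  refine ⟨exists_indep, indep_le, ?_⟩
  intro I C hI hImax hC hCmax
  -- I and C both have exactly q elements
  obtain ⟨I₀, hI₀, hI₀card⟩ := exists_indep
  have hIcard : I.card = q :=
    le_antisymm (indep_le I hI) (hI₀card ▸ hImax I₀ hI₀)
  have hCcard : C.card = q := by
    refine le_antisymm (clique_le C hC) ?_
    have := hCmax Kf hKclique
    omega
  -- double counting over translates
  set P : Finset (F × F) := I ×ˢ C with hPdef
  have hPcard : P.card = q ^ 2 := by
    rw [hPdef, Finset.card_product, hIcard, hCcard]; ring
  set f : F × F → F := fun p => p.1 - p.2 with hfdef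
  have hsum : P.card = ∑ t : F, (P.filter (fun p => f p = t)).card :=
    Finset.card_eq_sum_card_fiberwise (fun p _ => Finset.mem_univ _)
  have hfiber_le : ∀ t : F, (P.filter (fun p => f p = t)).card ≤ 1 := by
    intro t
    refine Finset.card_le_one.2 ?_
    rintro ⟨x1, c1⟩ h1 ⟨x2, c2⟩ h2
    obtain ⟨hm1, he1⟩ := Finset.mem_filter.1 h1
    obtain ⟨hm2, he2⟩ := Finset.mem_filter.1 h2
    have hx1 : x1 ∈ I := (Finset.mem_product.1 hm1).1
    have hc1 : c1 ∈ C := (Finset.mem_product.1 hm1).2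
    have hx2 : x2 ∈ I := (Finset.mem_product.1 hm2).1
    have hc2 : c2 ∈ C := (Finset.mem_product.1 hm2).2
    have heq : x1 - x2 = c1 - c2 := by
      have e1 : x1 - c1 = t := he1
      have e2 : x2 - c2 = t := he2
      linear_combination e1 - e2
    by_cases hxx : x1 = x2
    · have : c1 = c2 := by
        have : c1 - c2 = 0 := by rw [← heq, hxx]; ring
        linear_combination this
      simp [hxx, this]
    · exfalso
      have hcc : c1 ≠ c2 := by
        intro h
        apply hxx
        have : x1 - x2 = 0 := by rw [heq, h]; ring
        linear_combination this
      have hadj : X.Adj c1 c2 := hC hc1 hc2 hcc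
      have hcS : c1 - c2 ∈ S := ((hX _ _).1 hadj).2
      have : X.Adj x1 x2 := (hX _ _).2 ⟨hxx, heq ▸ hcS⟩
      exact hI x1 hx1 x2 hx2 hxx this
  -- the fiber at 0 is nonempty
  have hfiber0 : (P.filter (fun p => f p = 0)).card = 1 := by
    refine le_antisymm (hfiber_le 0) ?_
    by_contra hcon
    push_neg at hcon
    have h0 : (P.filter (fun p => f p = (0:F))).card = 0 := by omega
    have hsum2 : ∑ t : F, (P.filter (fun p => f p = t)).card
        = ∑ t ∈ (Finset.univ : Finset F).erase 0, (P.filter (fun p => f p = t)).card := by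
      rw [← Finset.sum_erase_add _ _ (Finset.mem_univ (0:F)), h0, add_zero]
    have hle : ∑ t ∈ (Finset.univ : Finset F).erase 0, (P.filter (fun p => f p = t)).card
        ≤ ((Finset.univ : Finset F).erase 0).card := by
      refine Finset.sum_le_card_nsmul _ _ 1 (fun t _ => hfiber_le t) |>.trans ?_
      simp
    have hce : ((Finset.univ : Finset F).erase 0).card = q ^ 2 - 1 := by
      rw [Finset.card_erase_of_mem (Finset.mem_univ _), Finset.card_univ, hF]
    have : q ^ 2 ≤ q ^ 2 - 1 := by
      calc q ^ 2 = P.card := hPcard.symm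
        _ = _ := hsum
        _ = _ := hsum2
        _ ≤ _ := hle
        _ = q ^ 2 - 1 := hce
    have : 1 ≤ q ^ 2 := Nat.one_le_pow _ _ (by omega)
    omega
  -- the fiber at 0 is the diagonal of I ∩ C
  have hdiag : P.filter (fun p => f p = 0) = (I ∩ C).image (fun x => (x, x)) := by
    ext ⟨a, b⟩
    simp only [Finset.mem_filter, Finset.mem_image, Finset.mem_inter, hPdef,
      Finset.mem_product, hfdef]
    constructor
    · rintro ⟨⟨ha, hb⟩, hab⟩
      have : a = b := by linear_combination hab
      exact ⟨a, ⟨ha, this ▸ hb⟩, by rw [this]⟩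
    · rintro ⟨x, ⟨hxI, hxC⟩, hx⟩
      obtain ⟨h1, h2⟩ := Prod.mk.injEq .. ▸ hx
      subst h1; subst h2
      exact ⟨⟨hxI, hxC⟩, by ring⟩
  rw [hdiag] at hfiber0
  rw [← hfiber0]
  exact (Finset.card_image_of_injective _ (fun a b h => (Prod.mk.injEq .. ▸ h).1)).symm
end
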